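/- arXiv:2105.09069 — 3 statements merged into one kernel-verified Lean document; each statement's English description precedes it below -/
import Mathlib

section
/- If λ ∈ Γ_k, then for every index 1 ≤ i ≤ n one has σ_{k-1}(λ|i) > 0, where σ_{k-1}(λ|i) denotes the (k-1)-st elementary symmetric polynomial of λ with the i-th entry deleted (equivalently, ∂σ_k/∂λ_i > 0 on Γ_k). -/
open Finset

/-- The k-th elementary symmetric polynomial of `lam : Fin n → ℝ`. -/
noncomputable def sigma' {n : ℕ} (k : ℕ) (lam : Fin n → ℝ) : ℝ :=
  ∑ s ∈ Finset.univ.powersetCard k, ∏ i ∈ s, lam i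

/-- The Garding cone `Γ_k`. -/
def Gamma {n : ℕ} (k : ℕ) : Set (Fin n → ℝ) :=
  {lam | ∀ j, 1 ≤ j → j ≤ k → 0 < sigma' j lam}

/-- `σ_k(λ|i)`: the k-th elementary symmetric polynomial of λ with the i-th entry deleted. -/
noncomputable def sigmaDel {n : ℕ} (k : ℕ) (lam : Fin n → ℝ) (i : Fin n) : ℝ :=
  ∑ s ∈ (Finset.univ.erase i).powersetCard k, ∏ j ∈ s, lam j

section Aux

open Polynomial


lemma eval_prodXsubC_pos (s : Multiset ℝ) {β : ℝ} (h : ∀ r ∈ s, r < β) :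
    0 < ((s.map fun r => X - C r).prod).eval β := by
  induction s using Multiset.induction with
  | empty => simp
  | cons a t ih =>
      rw [Multiset.map_cons, Multiset.prod_cons, eval_mul]
      have ha : a < β := h a (Multiset.mem_cons_self a t)
      have := ih (fun r hr => h r (Multiset.mem_cons_of_mem hr))
      have : (0:ℝ) < (β - a) * ((t.map fun r => X - C r).prod).eval β :=
        mul_pos (by linarith) this
      simpa using this

lemma eval_derivative_prodXsubC_nonneg (s : Multiset ℝ) {β : ℝ} (h : ∀ r ∈ s, r < β) :
    0 ≤ (derivative ((s.map fun r => X - C r).prod)).eval β := by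
  induction s using Multiset.induction with
  | empty => simp
  | cons a t ih =>
      rw [Multiset.map_cons, Multiset.prod_cons, derivative_mul, eval_add, eval_mul, eval_mul]
      have ha : a < β := h a (Multiset.mem_cons_self a t)
      have h1 := ih (fun r hr => h r (Multiset.mem_cons_of_mem hr))
      have h2 := eval_prodXsubC_pos t (fun r hr => h r (Multiset.mem_cons_of_mem hr))
      have e1 : (derivative (X - C a)).eval β = 1 := by simp
      rw [e1]
      have e2 : ((X : ℝ[X]) - C a).eval β = β - a := by simp
      rw [e2]
      nlinarith

lemma eval_derivative_prodXsubC_pos (s : Multiset ℝ) (hs : s ≠ 0) {β : ℝ}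
    (h : ∀ r ∈ s, r < β) :
    0 < (derivative ((s.map fun r => X - C r).prod)).eval β := by
  obtain ⟨a, t, rfl⟩ : ∃ a t, s = a ::ₘ t := by
    rcases Multiset.exists_mem_of_ne_zero hs with ⟨a, ha⟩
    exact ⟨a, s.erase a, (Multiset.cons_erase ha).symm⟩
  rw [Multiset.map_cons, Multiset.prod_cons, derivative_mul, eval_add, eval_mul, eval_mul]
  have ha : a < β := h a (Multiset.mem_cons_self a t)
  have h1 := eval_derivative_prodXsubC_nonneg t (fun r hr => h r (Multiset.mem_cons_of_mem hr))
  have h2 := eval_prodXsubC_pos t (fun r hr => h r (Multiset.mem_cons_of_mem hr))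
  have e1 : (derivative (X - C a)).eval β = 1 := by simp
  have e2 : ((X : ℝ[X]) - C a).eval β = β - a := by simp
  rw [e1, e2]
  nlinarith


lemma splits_derivative {p : ℝ[X]} (hp : p.Splits) :
    (derivative p).Splits := by
  rcases eq_or_ne (derivative p) 0 with h | h
  · rw [h]; exact Splits.zero
  · have hdeg : p.natDegree ≠ 0 := by
      intro h0
      exact h (by rw [eq_C_of_natDegree_eq_zero h0]; simp)
    rw [splits_iff_card_roots] at hp ⊢
    have h1 := Polynomial.card_roots_le_derivative p
    have h2 : (derivative p).roots.card ≤ (derivative p).natDegree := card_roots' _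
    have h3 : (derivative p).natDegree ≤ p.natDegree - 1 := natDegree_derivative_le p
    omega
  
lemma splits_iterate_derivative {p : ℝ[X]} (hp : p.Splits) (m : ℕ) :
    (derivative^[m] p).Splits := by
  induction m with
  | zero => exact hp
  | succ m ih => rw [Function.iterate_succ_apply']; exact splits_derivative ih

lemma eval_pos_of_roots_lt {p : ℝ[X]} (hp : p.Splits) (hl : 0 < p.leadingCoeff)
    {β : ℝ} (h : ∀ r ∈ p.roots, r < β) : 0 < p.eval β := by
  conv_lhs => rw [show (0:ℝ) = 0 from rfl]
  rw [hp.eq_prod_roots, eval_mul, eval_C]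
  exact mul_pos hl (eval_prodXsubC_pos _ h)

lemma eval_derivative_pos_of_roots_lt {p : ℝ[X]} (hp : p.Splits)
    (hl : 0 < p.leadingCoeff) (hroots : p.roots ≠ 0) {β : ℝ}
    (h : ∀ r ∈ p.roots, r < β) : 0 < (derivative p).eval β := by
  have : derivative p = C p.leadingCoeff * derivative ((p.roots.map fun a => X - C a).prod) := by
    conv_lhs => rw [hp.eq_prod_roots]
    rw [derivative_C_mul]
  rw [this, eval_mul, eval_C]
  exact mul_pos hl (eval_derivative_prodXsubC_pos _ hroots h)

lemma eval_nonpos_at_max_root_derivative {p : ℝ[X]} (hp : p.Splits)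
    (hl : 0 < p.leadingCoeff) {β : ℝ} (hβ : β ∈ (derivative p).roots)
    (hmax : ∀ r ∈ (derivative p).roots, r ≤ β) :
    p.eval β ≤ 0 := by
  have hp0 : p ≠ 0 := fun h => by simp [h] at hl
  have hd0 : derivative p ≠ 0 := by
    intro h; rw [h] at hβ; simp at hβ
  have key : ∀ c, c ∈ (derivative p).roots → β < c → False := by
    intro c hc h
    exact absurd (hmax c hc) (not_le.2 h)
  by_cases hβroot : p.eval β = 0
  · exact le_of_eq hβroot
  have hβnot : β ∉ p.roots := by
    intro h
    exact hβroot ((mem_roots hp0).1 h)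
  -- at most one root of p exceeds β (with multiplicity)
  have hfilter : (p.roots.filter (β < ·)).card ≤ 1 := by
    by_contra hc
    push_neg at hc
    obtain ⟨a, ha⟩ : ∃ a, a ∈ p.roots.filter (β < ·) :=
      Multiset.exists_mem_of_ne_zero (by
        intro h0; rw [h0] at hc; simp at hc)
    obtain ⟨b, hb⟩ : ∃ b, b ∈ (p.roots.filter (β < ·)).erase a :=
      Multiset.exists_mem_of_ne_zero (by
        intro h0
        have := Multiset.card_erase_of_mem ha
        rw [h0] at this
        simp at this
        omega)
    have hbmem : b ∈ p.roots.filter (β < ·) := Multiset.mem_of_mem_erase hb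
    have haR : a ∈ p.roots := Multiset.mem_of_mem_filter ha
    have hbR : b ∈ p.roots := Multiset.mem_of_mem_filter hbmem
    have haβ : β < a := Multiset.of_mem_filter ha
    have hbβ : β < b := Multiset.of_mem_filter hbmem
    rcases eq_or_ne a b with rfl | hab
    · -- multiple root
      have hcount : 2 ≤ (p.roots.filter (β < ·)).count a := by
        have h1 : a ∈ (p.roots.filter (β < ·)).erase a := hb
        have h2 := Multiset.count_erase_self a (p.roots.filter (β < ·))
        have h3 : 0 < ((p.roots.filter (β < ·)).erase a).count a :=
          Multiset.count_pos.2 h1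
        omega
      have hcount2 : 2 ≤ p.roots.count a :=
        le_trans hcount (Multiset.count_le_of_le a (Multiset.filter_le _ _))
      rw [Polynomial.count_roots] at hcount2
      have hder : 1 ≤ (derivative p).rootMultiplicity a := by
        have := Polynomial.rootMultiplicity_sub_one_le_derivative_rootMultiplicity p a
        omega
      have : a ∈ (derivative p).roots := by
        rw [mem_roots hd0]
        exact (Polynomial.rootMultiplicity_pos hd0).1 (by omega)
      exact key a this haβ
    · -- two distinct roots > β : Rolle
      set lo := min a b with hlo
      set hi := max a b with hhi
      have hlohi : lo < hi := min_lt_max.2 hab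
      have hplo : p.eval lo = 0 := by
        rcases min_choice a b with h | h <;> rw [hlo, h]
        · exact (mem_roots hp0).1 haR
        · exact (mem_roots hp0).1 hbR
      have hphi : p.eval hi = 0 := by
        rcases max_choice a b with h | h <;> rw [hhi, h]
        · exact (mem_roots hp0).1 haR
        · exact (mem_roots hp0).1 hbR
      obtain ⟨z, hz, hz0⟩ := exists_deriv_eq_zero hlohi p.continuousOn (hplo.trans hphi.symm)
      have hzroot : z ∈ (derivative p).roots := by
        rw [mem_roots hd0]
        have := p.deriv (x := z)
        rw [IsRoot]
        rw [← this, hz0]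
      have hzβ : β < z := lt_of_le_of_lt (le_min haβ.le hbβ.le) hz.1
      exact key z hzroot hzβ
  -- now the sign computation
  by_cases hone : ∃ a ∈ p.roots, β < a
  · obtain ⟨a, haR, haβ⟩ := hone
    have hrest : ∀ r ∈ p.roots.erase a, r < β := by
      intro r hr
      have hrR : r ∈ p.roots := Multiset.mem_of_mem_erase hr
      rcases lt_or_ge r β with h | h
      · exact h
      have hrβ : β < r := lt_of_le_of_ne h (fun e => hβnot (e ▸ hrR))
      -- then both a and r (counted in erase) are in the filter: contradiction with card ≤ 1
      exfalso
      rcases eq_or_ne r a with rfl | hra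
      · have h1 : 2 ≤ p.roots.count r := by
          have h3 : 0 < (p.roots.erase r).count r := Multiset.count_pos.2 hr
          have h2 := Multiset.count_erase_self r p.roots
          omega
        have : 2 ≤ (p.roots.filter (β < ·)).count r := by
          rw [Multiset.count_filter_of_pos hrβ]
          exact h1
        have hcard := Multiset.count_le_card r (p.roots.filter (β < ·))
        omega
      · have h1 : a ∈ p.roots.filter (β < ·) := Multiset.mem_filter.2 ⟨haR, haβ⟩
        have h2 : r ∈ p.roots.filter (β < ·) := Multiset.mem_filter.2 ⟨hrR, hrβ⟩
        have h3 : r ∈ (p.roots.filter (β < ·)).erase a := (Multiset.mem_erase_of_ne hra).2 h2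
        have h4 : (p.roots.filter (β < ·)).card
            = ((p.roots.filter (β < ·)).erase a).card + 1 := by
          conv_lhs => rw [← Multiset.cons_erase h1]
          rw [Multiset.card_cons]
        have h5 : 0 < ((p.roots.filter (β < ·)).erase a).card :=
          Multiset.card_pos.2 (fun h0 => by rw [h0] at h3; simp at h3)
        omega
    set rest := p.roots.erase a with hrestdef
    have hrw : p.roots = a ::ₘ rest := (Multiset.cons_erase haR).symm
    have hpos := eval_prodXsubC_pos rest hrest
    have hEq : p.eval β = p.leadingCoeff *
        ((β - a) * ((rest.map fun r => X - C r).prod.eval β)) := by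
      conv_lhs => rw [hp.eq_prod_roots]
      rw [hrw, Multiset.map_cons, Multiset.prod_cons, eval_mul, eval_mul, eval_sub, eval_X,
        eval_C, eval_C]
    rw [hEq]
    have h6 : (β - a) * ((rest.map fun r => X - C r).prod.eval β) < 0 :=
      mul_neg_of_neg_of_pos (by linarith) hpos
    exact (mul_neg_of_pos_of_neg hl h6).le
  · push_neg at hone
    have hall : ∀ r ∈ p.roots, r < β := by
      intro r hr
      exact lt_of_le_of_ne (hone r hr) (fun e => hβnot (e ▸ hr))
    have hne : p.roots ≠ 0 := by
      intro h0
      have : p.natDegree = 0 := by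
        have := (splits_iff_card_roots.1 hp)
        rw [h0] at this
        simpa using this.symm
      exact hd0 (by rw [eq_C_of_natDegree_eq_zero this]; simp)
    have := eval_derivative_pos_of_roots_lt hp hl hne hall
    have hβ0 : (derivative p).eval β = 0 := (mem_roots hd0).1 hβ
    rw [hβ0] at this
    exact absurd this (lt_irrefl 0)


lemma iterate_derivative_linear_mul (a : ℝ) (Q : ℝ[X]) (m : ℕ) :
    derivative^[m + 1] ((X + C a) * Q) =
      (X + C a) * derivative^[m + 1] Q + (m + 1) • derivative^[m] Q := by
  induction m with
  | zero =>
      simp only [zero_add, Function.iterate_one, Function.iterate_zero, id_eq, one_smul,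
        derivative_mul, derivative_add, derivative_X, derivative_C, add_zero, one_mul]
      ring
  | succ m ih =>
      have hBA : derivative ((⇑derivative)^[m] Q) = (⇑derivative)^[m + 1] Q :=
        (Function.iterate_succ_apply' derivative m Q).symm
      rw [Function.iterate_succ_apply' derivative (m + 1) ((X + C a) * Q), ih, derivative_add,
        derivative_mul, derivative_smul, hBA,
        Function.iterate_succ_apply' derivative (m + 1) Q]
      simp only [derivative_add, derivative_X, derivative_C, add_zero, one_mul]
      set A := (⇑derivative)^[m + 1] Q
      rw [succ_nsmul]
      ring

end Aux

open Polynomial Finset in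
/-- If λ ∈ Γ_k, then σ_{k-1}(λ|i) > 0 for every index i. -/
theorem sigmaDel_pos {n k : ℕ} (hk : 1 ≤ k) (hkn : k ≤ n) {lam : Fin n → ℝ}
    (hlam : lam ∈ (Gamma k : Set (Fin n → ℝ))) (i : Fin n) :
    0 < sigmaDel (k - 1) lam i := by
  classical
  have hn1 : 1 ≤ n := le_trans hk hkn
  set a := lam i with ha
  set s : Finset (Fin n) := Finset.univ.erase i with hs
  have hscard : s.card = n - 1 := by
    rw [hs, card_erase_of_mem (mem_univ i), card_univ, Fintype.card_fin]
  set Q : ℝ[X] := ∏ j ∈ s, (X + C (lam j)) with hQ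
  obtain ⟨m, hm⟩ : ∃ m, m = n - k := ⟨_, rfl⟩
  have hmonicfac : ∀ j ∈ s, (X + C (lam j)).Monic := fun j _ => monic_X_add_C _
  have hQmonic : Q.Monic := monic_prod_of_monic _ _ hmonicfac
  have hQdeg : Q.natDegree = n - 1 := by
    rw [hQ, natDegree_prod_of_monic _ _ hmonicfac]
    simp only [natDegree_X_add_C, Finset.sum_const, smul_eq_mul, mul_one]
    exact hscard
  have hsplitsfac : ∀ (t : Finset (Fin n)), ∀ j ∈ t, Splits (X + C (lam j)) := by
    intro t j _
    have : (X : ℝ[X]) + C (lam j) = X - C (-(lam j)) := by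
      rw [map_neg, sub_neg_eq_add]
    rw [this]
    exact Splits.X_sub_C _
  have hQsplits : Q.Splits := Splits.prod (hsplitsfac s)
  set P : ℝ[X] := ∏ j ∈ Finset.univ, (X + C (lam j)) with hP
  have hPQ : P = (X + C a) * Q := by
    rw [hP, hQ, ha, hs]
    exact (Finset.mul_prod_erase univ _ (mem_univ i)).symm
  have hPmonic : P.Monic := monic_prod_of_monic _ _ (fun j _ => monic_X_add_C _)
  have hPdeg : P.natDegree = n := by
    rw [hP, natDegree_prod_of_monic _ _ (fun j _ => monic_X_add_C _)]
    simp [natDegree_X_add_C]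
  -- coefficients of P are elementary symmetric polynomials
  have hPcoeff : ∀ j : ℕ, 1 ≤ j → j ≤ k → 0 < P.coeff (n - j) := by
    intro j hj1 hjk
    have hjn : j ≤ n := le_trans hjk hkn
    have h1 : P.coeff (n - j) = ∑ t ∈ Finset.univ.powersetCard j, ∏ l ∈ t, lam l := by
      rw [hP]
      have hle : n - j ≤ #(Finset.univ : Finset (Fin n)) := by
        simp only [card_univ, Fintype.card_fin]; omega
      rw [Finset.prod_X_add_C_coeff _ _ hle]
      congr 2
      simp only [card_univ, Fintype.card_fin]
      omega
    rw [h1]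
    exact hlam j hj1 hjk
  have hPtop : P.coeff n = 1 := by
    have := hPmonic.coeff_natDegree
    rwa [hPdeg] at this
  -- the iterated derivatives
  set F : ℝ[X] := derivative^[m] P with hF
  set G : ℝ[X] := derivative^[m] Q with hG
  have hFcoeffpos : ∀ t : ℕ, t ≤ k → 0 < F.coeff t := by
    intro t htk
    rw [hF, Polynomial.coeff_iterate_derivative]
    have hpos : 0 < P.coeff (t + m) := by
      rcases eq_or_lt_of_le htk with rfl | hlt
      · have : t + m = n := by omega
        rw [this, hPtop]; norm_num
      · have : t + m = n - (k - t) := by omega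
        rw [this]
        exact hPcoeff (k - t) (by omega) (by omega)
    have hd : 0 < (t + m).descFactorial m := Nat.pos_of_ne_zero (by
        rw [Ne, Nat.descFactorial_eq_zero_iff_lt]
        omega)
    rw [nsmul_eq_mul]
    positivity
  have hFdeg : F.natDegree ≤ k := by
    have h := Polynomial.natDegree_iterate_derivative P m
    rw [hPdeg, ← hF] at h
    omega
  have hFeval : ∀ β : ℝ, 0 ≤ β → 0 < F.eval β := by
    intro β hβ
    rw [Polynomial.eval_eq_sum_range]
    apply Finset.sum_pos'
    · intro t ht
      have htk : t ≤ k := by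
        rw [Finset.mem_range] at ht
        omega
      exact mul_nonneg (hFcoeffpos t htk).le (pow_nonneg hβ t)
    · refine ⟨0, Finset.mem_range.2 (by omega), ?_⟩
      simpa using hFcoeffpos 0 (by omega)
  -- G facts
  have hGsplits : G.Splits := splits_iterate_derivative hQsplits m
  have hQtop : Q.coeff (n - 1) = 1 := by
    have := hQmonic.coeff_natDegree
    rwa [hQdeg] at this
  have hGcoefftop : G.coeff (k - 1) = ((n - 1).descFactorial m : ℝ) := by
    rw [hG, Polynomial.coeff_iterate_derivative]
    have h1 : k - 1 + m = n - 1 := by omega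
    rw [h1, hQtop, nsmul_eq_mul, mul_one]
  have hGdeg : G.natDegree = k - 1 := by
    have hle : G.natDegree ≤ k - 1 := by
      have h := Polynomial.natDegree_iterate_derivative Q m
      rw [hQdeg, ← hG] at h
      omega
    have hne : G.coeff (k - 1) ≠ 0 := by
      rw [hGcoefftop]
      have : 0 < (n - 1).descFactorial m := Nat.pos_of_ne_zero (by
        rw [Ne, Nat.descFactorial_eq_zero_iff_lt]
        omega)
      positivity
    exact le_antisymm hle (le_natDegree_of_ne_zero hne)
  have hGlead : 0 < G.leadingCoeff := by
    rw [Polynomial.leadingCoeff, hGdeg, hGcoefftop]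
    have : 0 < (n - 1).descFactorial m := Nat.pos_of_ne_zero (by
        rw [Ne, Nat.descFactorial_eq_zero_iff_lt]
        omega)
    positivity
  -- reduce the goal to positivity of G.eval 0
  have hQm : sigmaDel (k - 1) lam i = Q.coeff m := by
    rw [hQ]
    have hle : m ≤ #s := by omega
    rw [Finset.prod_X_add_C_coeff _ _ hle]
    rw [sigmaDel]
    congr 2
    omega
  have hG0 : G.coeff 0 = (m.descFactorial m : ℝ) * Q.coeff m := by
    rw [hG, Polynomial.coeff_iterate_derivative, nsmul_eq_mul, zero_add]
  -- main positivity claim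
  have hGpos : 0 < G.eval 0 := by
    by_cases hcase : ∀ r ∈ G.roots, r < 0
    · exact eval_pos_of_roots_lt hGsplits hGlead hcase
    · exfalso
      push_neg at hcase
      obtain ⟨r0, hr0mem, hr0⟩ := hcase
      have hne : G.roots.toFinset.Nonempty := ⟨r0, Multiset.mem_toFinset.2 hr0mem⟩
      set β := G.roots.toFinset.max' hne with hβ
      have hβmem : β ∈ G.roots := Multiset.mem_toFinset.1 (G.roots.toFinset.max'_mem hne)
      have hβmax : ∀ r ∈ G.roots, r ≤ β := fun r hr =>
        Finset.le_max' _ r (Multiset.mem_toFinset.2 hr)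
      have hβ0 : 0 ≤ β := le_trans hr0 (hβmax r0 hr0mem)
      have hFβ : 0 < F.eval β := hFeval β hβ0
      have hGβ : G.eval β = 0 := by
        have : G ≠ 0 := fun h0 => by simp [h0] at hβmem
        exact (mem_roots this).1 hβmem
      rcases Nat.eq_zero_or_pos m with hm0 | hmpos
      · -- m = 0 : F = (X + C a) * G
        have hFG : F = (X + C a) * G := by
          rw [hF, hG, hm0, hPQ]
          simp
        rw [hFG, eval_mul, hGβ, mul_zero] at hFβ
        exact lt_irrefl 0 hFβ
      · obtain ⟨m', rfl⟩ : ∃ m', m = m' + 1 := ⟨m - 1, by omega⟩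
        set H : ℝ[X] := derivative^[m'] Q with hH
        have hHsplits : H.Splits := splits_iterate_derivative hQsplits m'
        have hHcoefftop : H.coeff k = ((n - 1).descFactorial m' : ℝ) := by
          rw [hH, Polynomial.coeff_iterate_derivative]
          have h1 : k + m' = n - 1 := by omega
          rw [h1, hQtop, nsmul_eq_mul, mul_one]
        have hHdeg : H.natDegree = k := by
          have hle : H.natDegree ≤ k := by
            have h := Polynomial.natDegree_iterate_derivative Q m'
            rw [hQdeg, ← hH] at h
            omega
          have hne2 : H.coeff k ≠ 0 := by
            rw [hHcoefftop]
            have : 0 < (n - 1).descFactorial m' := Nat.pos_of_ne_zero (by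
        rw [Ne, Nat.descFactorial_eq_zero_iff_lt]
        omega)
            positivity
          exact le_antisymm hle (le_natDegree_of_ne_zero hne2)
        have hHlead : 0 < H.leadingCoeff := by
          rw [Polynomial.leadingCoeff, hHdeg, hHcoefftop]
          have : 0 < (n - 1).descFactorial m' := Nat.pos_of_ne_zero (by
        rw [Ne, Nat.descFactorial_eq_zero_iff_lt]
        omega)
          positivity
        have hGH : G = derivative H := by
          rw [hG, hH, Function.iterate_succ_apply']
        have hcore : H.eval β ≤ 0 := by
          apply eval_nonpos_at_max_root_derivative hHsplits hHlead
          · rw [← hGH]; exact hβmem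
          · rw [← hGH]; exact hβmax
        have hLeib : F = (X + C a) * G + (m' + 1) • H := by
          rw [hF, hG, hH, hPQ]
          exact iterate_derivative_linear_mul a Q m'
        rw [hLeib, eval_add, eval_mul, hGβ, mul_zero, zero_add, eval_smul] at hFβ
        have : (0:ℝ) < (m' + 1 : ℕ) • H.eval β := hFβ
        rw [nsmul_eq_mul] at this
        nlinarith
  -- conclude
  rw [hQm]
  rw [Polynomial.coeff_zero_eq_eval_zero] at hG0
  have hd : (0:ℝ) < (m.descFactorial m : ℝ) := by
    have : 0 < m.descFactorial m := Nat.pos_of_ne_zero (by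
      rw [Ne, Nat.descFactorial_eq_zero_iff_lt]
      omega)
    positivity
  nlinarith [hGpos, hG0]
end

section
/- Generalized Newton–MacLaurin inequality: for λ ∈ Γ_m and integers m > l ≥ 0, r > s ≥ 0 with m ≥ r and l ≥ s, one has [ (σ_m(λ)/C(n,m)) / (σ_l(λ)/C(n,l)) ]^{1/(m-l)} ≤ [ (σ_r(λ)/C(n,r)) / (σ_s(λ)/C(n,s)) ]^{1/(r-s)}. -/
open Finset

-- double counting
lemma R1 {α : Type*} [DecidableEq α] (s : Finset α) (f : α → ℝ) (k : ℕ) :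
    ∑ i ∈ s, ∑ t ∈ (s.erase i).powersetCard k, ∏ j ∈ t, f j
      = ((s.card - k : ℕ) : ℝ) * ∑ t ∈ s.powersetCard k, ∏ j ∈ t, f j := by
  have h1 : ∀ i ∈ s, (s.erase i).powersetCard k
      = (s.powersetCard k).filter (fun t => i ∉ t) := by
    intro i _
    ext t
    simp only [mem_powersetCard, mem_filter, Finset.subset_erase]
    tauto
  rw [Finset.sum_congr rfl fun i hi => by rw [h1 i hi]]
  simp only [Finset.sum_filter]
  rw [Finset.sum_comm]
  rw [Finset.mul_sum]
  refine Finset.sum_congr rfl fun t ht => ?_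
  rw [← Finset.sum_filter, Finset.sum_const, nsmul_eq_mul]
  congr 1
  rw [Finset.filter_not, Finset.filter_mem_eq_inter]
  rw [mem_powersetCard] at ht
  rw [Finset.inter_eq_right.2 ht.1, Finset.card_sdiff_of_subset ht.1, ht.2]

lemma top_minus_one {α : Type*} [DecidableEq α] (s : Finset α) (f : α → ℝ) (hs : s.Nonempty) :
    ∑ t ∈ s.powersetCard (s.card - 1), ∏ j ∈ t, f j = ∑ j ∈ s, ∏ i ∈ s.erase j, f i := by
  have h := R1 s f (s.card - 1)
  have hc : s.card - (s.card - 1) = 1 := by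
    have : 1 ≤ s.card := Finset.card_pos.2 hs
    omega
  rw [hc] at h
  rw [Nat.cast_one, one_mul] at h
  rw [← h]
  refine Finset.sum_congr rfl fun i hi => ?_
  have hce : (s.erase i).card = s.card - 1 := Finset.card_erase_of_mem hi
  rw [← hce, Finset.powersetCard_self, Finset.sum_singleton]

lemma newton_top {N : ℕ} (hN : 2 ≤ N) (f : Fin N → ℝ) :
    2 * (N:ℝ)^2 * (sigma' N f * sigma' (N-2) f) ≤ (N:ℝ) * ((N:ℝ)-1) * (sigma' (N-1) f)^2 := by
  classical
  set a : Fin N → ℝ := fun i => ∏ j ∈ Finset.univ.erase i, f j with ha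
  have hcard : (Finset.univ : Finset (Fin N)).card = N := by simp
  -- sigma' N f = prod
  have hps : (Finset.univ : Finset (Fin N)).powersetCard N = {Finset.univ} := by
    have := Finset.powersetCard_self (Finset.univ : Finset (Fin N))
    rwa [hcard] at this
  have idA : sigma' N f = ∏ i, f i := by
    rw [sigma', hps, Finset.sum_singleton]
  -- sigma' (N-1) f = ∑ a i
  have idB : sigma' (N-1) f = ∑ i, a i := by
    have h := top_minus_one (Finset.univ : Finset (Fin N)) f
      (by rw [← Finset.card_pos, hcard]; omega)
    rw [hcard] at h
    rw [sigma', h]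
  -- 2 * sigma' (N-2) = double sum
  have idC : 2 * sigma' (N-2) f = ∑ i, ∑ j ∈ Finset.univ.erase i, ∏ p ∈ (Finset.univ.erase i).erase j, f p := by
    have h := R1 (Finset.univ : Finset (Fin N)) f (N-2)
    rw [hcard] at h
    have hc2 : N - (N - 2) = 2 := by omega
    rw [hc2, Nat.cast_two] at h
    rw [sigma', ← h]
    refine Finset.sum_congr rfl fun i _ => ?_
    have hce : (Finset.univ.erase i).card = N - 1 := by rw [Finset.card_erase_of_mem (Finset.mem_univ i), hcard]
    have h2 := top_minus_one (Finset.univ.erase i) f (by rw [← Finset.card_pos, hce]; omega)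
    rw [hce] at h2
    have : N - 2 = N - 1 - 1 := by omega
    rw [this, h2]
  -- a i * a j = σ_N * D i j for j ≠ i
  have key : ∀ i : Fin N, ∀ j ∈ Finset.univ.erase i,
      (∏ i, f i) * ∏ p ∈ (Finset.univ.erase i).erase j, f p = a i * a j := by
    intro i j hj
    have hji : j ≠ i := Finset.ne_of_mem_erase hj
    have h1 : a i = f j * ∏ p ∈ (Finset.univ.erase i).erase j, f p := by
      rw [ha]; exact (Finset.mul_prod_erase _ f hj).symm
    have h2 : a j = f i * ∏ p ∈ (Finset.univ.erase j).erase i, f p := by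
      rw [ha]
      exact (Finset.mul_prod_erase _ f (Finset.mem_erase.2 ⟨Ne.symm hji, Finset.mem_univ i⟩)).symm
    have h3 : ∏ i, f i = f i * a i := (Finset.mul_prod_erase _ f (Finset.mem_univ i)).symm
    rw [Finset.erase_right_comm] at h2
    rw [h3, h1, h2]; ring
  -- 2 σ_N σ_{N-2} = (∑a)^2 - ∑ a^2
  have idD : 2 * (sigma' N f * sigma' (N-2) f) = (∑ i, a i)^2 - ∑ i, (a i)^2 := by
    have : 2 * (sigma' N f * sigma' (N-2) f) = sigma' N f * (2 * sigma' (N-2) f) := by ring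
    rw [this, idC, idA, Finset.mul_sum]
    have : ∀ i : Fin N, (∏ i, f i) * ∑ j ∈ Finset.univ.erase i, ∏ p ∈ (Finset.univ.erase i).erase j, f p
        = a i * ((∑ j, a j) - a i) := by
      intro i
      rw [Finset.mul_sum]
      rw [Finset.sum_congr rfl (fun j hj => key i j hj)]
      rw [← Finset.mul_sum, Finset.sum_erase_eq_sub (Finset.mem_univ i)]
    rw [Finset.sum_congr rfl (fun i _ => this i)]
    simp only [mul_sub]
    rw [Finset.sum_sub_distrib, ← Finset.sum_mul, sq]
    congr 1
    exact Finset.sum_congr rfl fun i _ => (sq (a i)).symm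
  have hCS : (∑ i, a i)^2 ≤ (N:ℝ) * ∑ i, (a i)^2 := by
    have := sq_sum_le_card_mul_sum_sq (s := (Finset.univ : Finset (Fin N))) (f := a)
    rwa [hcard] at this
  have hN1 : (1:ℝ) ≤ (N:ℝ) := by exact_mod_cast Nat.one_le_of_lt hN
  rw [idB]
  have hNn : (0:ℝ) ≤ (N:ℝ) := by positivity
  nlinarith [idD, mul_le_mul_of_nonneg_left hCS hNn, hN1, sq_nonneg (∑ i, a i)]

lemma sigma'_esymm {N : ℕ} (f : Fin N → ℝ) (j : ℕ) :
    (Multiset.map f Finset.univ.val).esymm j = sigma' j f := by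
  rw [Finset.esymm_map_val]
  rfl

lemma newton_top_multiset {N : ℕ} (hN : 2 ≤ N) (s : Multiset ℝ) (hs : Multiset.card s = N) :
    2 * (N:ℝ)^2 * (s.esymm N * s.esymm (N-2)) ≤ (N:ℝ) * ((N:ℝ)-1) * (s.esymm (N-1))^2 := by
  obtain ⟨L, rfl⟩ : ∃ L : List ℝ, s = ↑L := ⟨s.toList, (Multiset.coe_toList s).symm⟩
  have hlen : L.length = N := by simpa using hs
  subst hlen
  have hL : (↑L : Multiset ℝ) = Multiset.map L.get Finset.univ.val := by
    rw [Fin.univ_val_map, List.ofFn_get]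
  rw [hL, sigma'_esymm, sigma'_esymm, sigma'_esymm]
  exact newton_top hN L.get

open Polynomial in
lemma rolle_iter (p : ℝ[X]) (j : ℕ) :
    Multiset.card p.roots ≤ Multiset.card ((derivative^[j]) p).roots + j := by
  induction j generalizing p with
  | zero => simp
  | succ j ih =>
    calc Multiset.card p.roots ≤ Multiset.card (derivative p).roots + 1 :=
          p.card_roots_le_derivative
    _ ≤ (Multiset.card ((derivative^[j]) (derivative p)).roots + j) + 1 := by
          exact Nat.add_le_add_right (ih _) 1
    _ = _ := by rw [Function.iterate_succ_apply]; omega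

lemma sigma'_zero {n : ℕ} (lam : Fin n → ℝ) : sigma' 0 lam = 1 := by
  simp [sigma']

open Polynomial in
lemma newton_sigma {n k : ℕ} (lam : Fin n → ℝ) (hk : 1 ≤ k) (hkn : k + 1 ≤ n) :
    2 * ((k:ℝ)+1)^2 * ((((n-(k+1)).descFactorial (n-(k+1)) : ℕ):ℝ) *
        (((2+(n-(k+1))).descFactorial (n-(k+1)) : ℕ):ℝ)) *
      (sigma' (k+1) lam * sigma' (k-1) lam)
    ≤ ((k:ℝ)+1) * (k:ℝ) * ((((1+(n-(k+1))).descFactorial (n-(k+1)) : ℕ):ℝ))^2 *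
      (sigma' k lam)^2 := by
  classical
  set d := n - (k+1) with hd
  have hn : k + 1 + d = n := by omega
  set M : Multiset ℝ := Multiset.map (fun i => -lam i) Finset.univ.val with hM
  have hMcard : Multiset.card M = n := by simp [hM]
  set P : ℝ[X] := (M.map fun t => X - C t).prod with hP
  have hProots : P.roots = M := roots_multiset_prod_X_sub_C M
  have hPmonic : P.Monic := monic_multiset_prod_of_monic _ _ (fun t _ => monic_X_sub_C t)
  have hPdeg : P.natDegree = n := by
    rw [hP, natDegree_multiset_prod_of_monic _ (fun t ht => by
      obtain ⟨a, _, rfl⟩ := Multiset.mem_map.1 ht; exact monic_X_sub_C a)]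
    rw [Multiset.map_map]
    simp [natDegree_X_sub_C, hMcard]
  have hPcoeff : ∀ j, j ≤ n → P.coeff j = sigma' (n - j) lam := by
    intro j hj
    rw [hP, Multiset.prod_X_sub_C_coeff M (by omega)]
    rw [hMcard]
    have hes : M.esymm (n-j) = (-1:ℝ)^(n-j) * sigma' (n-j) lam := by
      rw [hM, Finset.esymm_map_val, sigma', Finset.mul_sum]
      refine Finset.sum_congr rfl fun t ht => ?_
      have htc : t.card = n - j := (Finset.mem_powersetCard.1 ht).2
      calc ∏ i ∈ t, -lam i = ∏ i ∈ t, (-1) * lam i := by simp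
      _ = (-1:ℝ)^(n-j) * ∏ i ∈ t, lam i := by
          rw [Finset.prod_mul_distrib, Finset.prod_const, htc]
    rw [hes, ← mul_assoc, ← pow_add, ← two_mul, pow_mul]
    norm_num
  set Q : ℝ[X] := (derivative^[d]) P with hQ
  have hQc : ∀ i, Q.coeff i = (((i+d).descFactorial d : ℕ):ℝ) * P.coeff (i+d) := by
    intro i; rw [hQ, coeff_iterate_derivative, nsmul_eq_mul]
  have hQdeg_le : Q.natDegree ≤ k+1 :=
    le_trans (natDegree_iterate_derivative _ _) (by omega)
  have hQroots_ge : k+1 ≤ Multiset.card Q.roots := by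
    have h2 := rolle_iter P d
    rw [hProots, hMcard, ← hQ] at h2
    omega
  have hQroots_le : Multiset.card Q.roots ≤ Q.natDegree := Q.card_roots'
  have hQdeg : Q.natDegree = k+1 := le_antisymm hQdeg_le (le_trans hQroots_ge hQroots_le)
  have hQcard : Multiset.card Q.roots = k + 1 := le_antisymm (hQdeg ▸ hQroots_le) hQroots_ge
  have hQlead : Q.leadingCoeff = ((n.descFactorial d : ℕ):ℝ) := by
    rw [leadingCoeff, hQdeg, hQc, hn, hPcoeff n le_rfl]
    simp [sigma'_zero]
  have hE : ∀ i, i ≤ 2 → (((i+d).descFactorial d : ℕ):ℝ) * sigma' (k+1-i) lam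
      = ((n.descFactorial d : ℕ):ℝ) * ((-1:ℝ)^(k+1-i) * Q.roots.esymm (k+1-i)) := by
    intro i hi
    have h1 := Polynomial.coeff_eq_esymm_roots_of_card (p := Q)
      (by rw [hQcard, hQdeg]) (k := i) (by omega)
    rw [hQdeg] at h1
    rw [hQc i, hPcoeff (i+d) (by omega)] at h1
    have he : n - (i+d) = k+1-i := by omega
    rw [he] at h1
    rw [h1, hQlead, mul_assoc]
  have e0 := hE 0 (by omega)
  have e1 := hE 1 (by omega)
  have e2 := hE 2 (by omega)
  have hk1 : k + 1 - 1 = k := by omega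
  have hk2 : k + 1 - 2 = k - 1 := by omega
  rw [hk1] at e1
  rw [hk2] at e2
  simp only [Nat.sub_zero, Nat.add_zero, zero_add] at e0 e1 e2
  set a : ℝ := ((n.descFactorial d : ℕ):ℝ) with haa
  set E : ℕ → ℝ := fun j => Q.roots.esymm j with hEdef
  have hTop := newton_top_multiset (N := k+1) (by omega) Q.roots hQcard
  have hks : (k+1) - 2 = k - 1 := by omega
  have hks2 : (k+1) - 1 = k := by omega
  rw [hks, hks2] at hTop
  push_cast at hTop
  -- sign bookkeeping
  have hsign : (-1:ℝ)^(k+1) * (-1:ℝ)^(k-1) = 1 := by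
    rw [← pow_add]
    have : k+1+(k-1) = 2*k := by omega
    rw [this, pow_mul]
    norm_num
  have hsign2 : (-1:ℝ)^k * (-1:ℝ)^k = 1 := by
    rw [← pow_add, ← two_mul, pow_mul]; norm_num
  have eqA : ((d.descFactorial d : ℕ):ℝ) * (((2+d).descFactorial d : ℕ):ℝ) *
      (sigma' (k+1) lam * sigma' (k-1) lam) = a^2 * (E (k+1) * E (k-1)) := by
    calc ((d.descFactorial d : ℕ):ℝ) * (((2+d).descFactorial d : ℕ):ℝ) *
        (sigma' (k+1) lam * sigma' (k-1) lam)
        = (((d.descFactorial d : ℕ):ℝ) * sigma' (k+1) lam) *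
          ((((2+d).descFactorial d : ℕ):ℝ) * sigma' (k-1) lam) := by ring
    _ = (a * ((-1:ℝ)^(k+1) * Q.roots.esymm (k+1))) *
        (a * ((-1:ℝ)^(k-1) * Q.roots.esymm (k-1))) := by rw [e0, e2]
    _ = a^2 * ((-1:ℝ)^(k+1) * (-1:ℝ)^(k-1)) * (E (k+1) * E (k-1)) := by
        simp only [hEdef]; ring
    _ = a^2 * (E (k+1) * E (k-1)) := by rw [hsign]; ring
  have eqB : ((((1+d).descFactorial d : ℕ):ℝ))^2 * (sigma' k lam)^2 = a^2 * (E k)^2 := by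
    calc ((((1+d).descFactorial d : ℕ):ℝ))^2 * (sigma' k lam)^2
        = ((((1+d).descFactorial d : ℕ):ℝ) * sigma' k lam)^2 := by ring
    _ = (a * ((-1:ℝ)^k * Q.roots.esymm k))^2 := by rw [e1]
    _ = a^2 * ((-1:ℝ)^k * (-1:ℝ)^k) * (E k)^2 := by simp only [hEdef]; ring
    _ = a^2 * (E k)^2 := by rw [hsign2]; ring
  have hfin := mul_le_mul_of_nonneg_left hTop (sq_nonneg a)
  calc 2 * ((k:ℝ)+1)^2 * (((d.descFactorial d : ℕ):ℝ) *
        (((2+d).descFactorial d : ℕ):ℝ)) * (sigma' (k+1) lam * sigma' (k-1) lam)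
      = 2 * ((k:ℝ)+1)^2 * (a^2 * (E (k+1) * E (k-1))) := by rw [← eqA]; ring
  _ = a^2 * (2 * ((k:ℝ)+1)^2 * (E (k+1) * E (k-1))) := by ring
  _ ≤ a^2 * (((k:ℝ)+1) * (((k:ℝ)+1)-1) * (E k)^2) := hfin
  _ = ((k:ℝ)+1) * (k:ℝ) * (a^2 * (E k)^2) := by
      have : ((k:ℝ)+1)-1 = (k:ℝ) := by ring
      rw [this]; ring
  _ = ((k:ℝ)+1) * (k:ℝ) * (((((1+d).descFactorial d : ℕ):ℝ))^2 * (sigma' k lam)^2) := by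
      rw [eqB]
  _ = ((k:ℝ)+1) * (k:ℝ) * ((((1+d).descFactorial d : ℕ):ℝ))^2 * (sigma' k lam)^2 := by ring



lemma newton_p {n k : ℕ} (lam : Fin n → ℝ) (hk : 1 ≤ k) (hkn : k + 1 ≤ n) :
    (sigma' (k-1) lam / (n.choose (k-1):ℝ)) * (sigma' (k+1) lam / (n.choose (k+1):ℝ))
      ≤ (sigma' k lam / (n.choose k:ℝ))^2 := by
  set d := n - (k+1) with hd
  have hn : k + 1 + d = n := by omega
  set A : ℝ := ((d.factorial : ℕ):ℝ) with hA
  set B : ℝ := (((k-1).factorial : ℕ):ℝ) with hB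
  set F : ℝ := ((n.factorial : ℕ):ℝ) with hF
  have hApos : 0 < A := by rw [hA]; exact_mod_cast d.factorial_pos
  have hBpos : 0 < B := by rw [hB]; exact_mod_cast (k-1).factorial_pos
  have hFpos : 0 < F := by rw [hF]; exact_mod_cast n.factorial_pos
  have hkR : (0:ℝ) < (k:ℝ) := by exact_mod_cast hk
  have hc0 : ((d.descFactorial d : ℕ):ℝ) = A := by
    rw [Nat.descFactorial_self, hA]
  have hfac1 : (((1+d).factorial : ℕ):ℝ) = ((d:ℝ)+1) * A := by
    rw [add_comm 1 d, Nat.factorial_succ, hA]; push_cast; ring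
  have hfac2 : (((2+d).factorial : ℕ):ℝ) = ((d:ℝ)+2) * (((d:ℝ)+1) * A) := by
    have h2d : 2 + d = (d+1) + 1 := by omega
    rw [h2d, Nat.factorial_succ, Nat.factorial_succ, hA]; push_cast; ring
  have hc1 : (((1+d).descFactorial d : ℕ):ℝ) = ((d:ℝ)+1) * A := by
    have h := Nat.factorial_mul_descFactorial (show d ≤ 1+d by omega)
    have h2 : 1 + d - d = 1 := by omega
    rw [h2, Nat.factorial_one, one_mul] at h
    rw [h]; exact hfac1
  have hc2 : (((2+d).descFactorial d : ℕ):ℝ) = ((d:ℝ)+2) * (((d:ℝ)+1) * A) / 2 := by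
    have h := Nat.factorial_mul_descFactorial (show d ≤ 2+d by omega)
    have h2 : 2 + d - d = 2 := by omega
    rw [h2, show Nat.factorial 2 = 2 from rfl] at h
    have h3 : (2:ℝ) * ((((2+d).descFactorial d : ℕ)):ℝ) = (((2+d).factorial : ℕ):ℝ) := by
      exact_mod_cast congrArg (fun x : ℕ => (x:ℝ)) h
    rw [eq_div_iff (by norm_num : (2:ℝ) ≠ 0), ← hfac2]
    linarith [h3]
  have hkfac : ((k.factorial : ℕ):ℝ) = (k:ℝ) * B := by
    have h := Nat.mul_factorial_pred (show k ≠ 0 by omega)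
    rw [hB]; exact_mod_cast h.symm
  have hk1fac : (((k+1).factorial : ℕ):ℝ) = ((k:ℝ)+1) * ((k:ℝ) * B) := by
    rw [Nat.factorial_succ]; push_cast [hkfac]; ring
  have hch1 : ((n.choose (k-1) : ℕ):ℝ) * (B * (((d:ℝ)+2) * (((d:ℝ)+1) * A))) = F := by
    have h := Nat.choose_mul_factorial_mul_factorial (show k-1 ≤ n by omega)
    have h2 : n - (k-1) = 2 + d := by omega
    rw [h2] at h
    have h3 : ((n.choose (k-1) : ℕ):ℝ) * (((k-1).factorial : ℕ):ℝ) *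
        (((2+d).factorial : ℕ):ℝ) = ((n.factorial : ℕ):ℝ) := by exact_mod_cast h
    rw [hfac2] at h3
    rw [hF, ← h3, hB]; ring
  have hch2 : ((n.choose k : ℕ):ℝ) * (((k:ℝ) * B) * (((d:ℝ)+1) * A)) = F := by
    have h := Nat.choose_mul_factorial_mul_factorial (show k ≤ n by omega)
    have h2 : n - k = 1 + d := by omega
    rw [h2] at h
    have h3 : ((n.choose k : ℕ):ℝ) * ((k.factorial : ℕ):ℝ) *
        (((1+d).factorial : ℕ):ℝ) = ((n.factorial : ℕ):ℝ) := by exact_mod_cast h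
    rw [hfac1, hkfac] at h3
    rw [hF, ← h3]; ring
  have hch3 : ((n.choose (k+1) : ℕ):ℝ) * ((((k:ℝ)+1) * ((k:ℝ) * B)) * A) = F := by
    have h := Nat.choose_mul_factorial_mul_factorial (show k+1 ≤ n by omega)
    have h2 : n - (k+1) = d := by omega
    rw [h2] at h
    have h3 : ((n.choose (k+1) : ℕ):ℝ) * (((k+1).factorial : ℕ):ℝ) *
        ((d.factorial : ℕ):ℝ) = ((n.factorial : ℕ):ℝ) := by exact_mod_cast h
    rw [hk1fac] at h3
    rw [hF, ← h3, hA]; ring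
  have hch1pos : (0:ℝ) < ((n.choose (k-1) : ℕ):ℝ) := by
    exact_mod_cast Nat.choose_pos (show k-1 ≤ n by omega)
  have hch2pos : (0:ℝ) < ((n.choose k : ℕ):ℝ) := by
    exact_mod_cast Nat.choose_pos (show k ≤ n by omega)
  have hch3pos : (0:ℝ) < ((n.choose (k+1) : ℕ):ℝ) := by
    exact_mod_cast Nat.choose_pos (show k+1 ≤ n by omega)
  have hdR : (0:ℝ) ≤ (d:ℝ) := Nat.cast_nonneg d
  have hden1 : (0:ℝ) < B * (((d:ℝ)+2) * (((d:ℝ)+1) * A)) :=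
    mul_pos hBpos (mul_pos (by linarith) (mul_pos (by linarith) hApos))
  have hden2 : (0:ℝ) < ((k:ℝ) * B) * (((d:ℝ)+1) * A) :=
    mul_pos (mul_pos hkR hBpos) (mul_pos (by linarith) hApos)
  have hden3 : (0:ℝ) < (((k:ℝ)+1) * ((k:ℝ) * B)) * A :=
    mul_pos (mul_pos (by linarith) (mul_pos hkR hBpos)) hApos
  have hid : 2 * ((k:ℝ)+1)^2 * (((d.descFactorial d : ℕ):ℝ) * (((2+d).descFactorial d : ℕ):ℝ))
        * (((n.choose (k-1) : ℕ):ℝ) * ((n.choose (k+1) : ℕ):ℝ))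
      = ((k:ℝ)+1) * (k:ℝ) * ((((1+d).descFactorial d : ℕ):ℝ))^2 * ((n.choose k : ℕ):ℝ)^2 := by
    rw [hc0, hc1, hc2]
    have e1 : ((n.choose (k-1) : ℕ):ℝ) = F / (B * (((d:ℝ)+2) * (((d:ℝ)+1) * A))) := by
      rw [eq_div_iff (ne_of_gt hden1)]; exact hch1
    have e2 : ((n.choose k : ℕ):ℝ) = F / (((k:ℝ) * B) * (((d:ℝ)+1) * A)) := by
      rw [eq_div_iff (ne_of_gt hden2)]; exact hch2
    have e3 : ((n.choose (k+1) : ℕ):ℝ) = F / ((((k:ℝ)+1) * ((k:ℝ) * B)) * A) := by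
      rw [eq_div_iff (ne_of_gt hden3)]; exact hch3
    rw [e1, e2, e3]
    field_simp
  have hns := newton_sigma lam hk hkn
  rw [← hd] at hns
  rw [div_mul_div_comm, div_pow, div_le_div_iff₀ (by positivity) (by positivity)]
  have hmul := mul_le_mul_of_nonneg_right hns
    (le_of_lt (mul_pos hch1pos hch3pos))
  have hc1pos : (0:ℝ) < (((1+d).descFactorial d : ℕ):ℝ) := by
    rw [hc1]; exact mul_pos (by linarith) hApos
  have hkey : ((k:ℝ)+1) * (k:ℝ) * ((((1+d).descFactorial d : ℕ):ℝ))^2 *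
      (sigma' (k-1) lam * sigma' (k+1) lam * ((n.choose k : ℕ):ℝ)^2)
      ≤ ((k:ℝ)+1) * (k:ℝ) * ((((1+d).descFactorial d : ℕ):ℝ))^2 *
      ((sigma' k lam)^2 * (((n.choose (k-1) : ℕ):ℝ) * ((n.choose (k+1) : ℕ):ℝ))) := by
    calc ((k:ℝ)+1) * (k:ℝ) * ((((1+d).descFactorial d : ℕ):ℝ))^2 *
        (sigma' (k-1) lam * sigma' (k+1) lam * ((n.choose k : ℕ):ℝ)^2)
        = 2 * ((k:ℝ)+1)^2 * (((d.descFactorial d : ℕ):ℝ) * (((2+d).descFactorial d : ℕ):ℝ))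
          * (sigma' (k+1) lam * sigma' (k-1) lam)
          * (((n.choose (k-1) : ℕ):ℝ) * ((n.choose (k+1) : ℕ):ℝ)) := by
          rw [show ((k:ℝ)+1) * (k:ℝ) * ((((1+d).descFactorial d : ℕ):ℝ))^2 *
              (sigma' (k-1) lam * sigma' (k+1) lam * ((n.choose k : ℕ):ℝ)^2)
              = ((k:ℝ)+1) * (k:ℝ) * ((((1+d).descFactorial d : ℕ):ℝ))^2 * ((n.choose k : ℕ):ℝ)^2
                * (sigma' (k-1) lam * sigma' (k+1) lam) from by ring, ← hid]
          ring
    _ ≤ ((k:ℝ)+1) * (k:ℝ) * ((((1+d).descFactorial d : ℕ):ℝ))^2 * (sigma' k lam)^2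
          * (((n.choose (k-1) : ℕ):ℝ) * ((n.choose (k+1) : ℕ):ℝ)) := hmul
    _ = ((k:ℝ)+1) * (k:ℝ) * ((((1+d).descFactorial d : ℕ):ℝ))^2 *
          ((sigma' k lam)^2 * (((n.choose (k-1) : ℕ):ℝ) * ((n.choose (k+1) : ℕ):ℝ))) := by
          ring
  have hcpos : (0:ℝ) < ((k:ℝ)+1) * (k:ℝ) * ((((1+d).descFactorial d : ℕ):ℝ))^2 := by
    have := sq_nonneg ((((1+d).descFactorial d : ℕ):ℝ))
    have h2 : (0:ℝ) < ((((1+d).descFactorial d : ℕ):ℝ))^2 := pow_pos hc1pos 2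
    exact mul_pos (mul_pos (by linarith) hkR) h2
  exact le_of_mul_le_mul_left (by linarith [hkey]) hcpos


lemma slope_chain (m : ℕ) (d : ℕ → ℝ) (hmono : ∀ i j, i ≤ j → j + 1 ≤ m → d j ≤ d i)
    {s l r : ℕ} (hsl : s ≤ l) (hlm : l < m) (hsr : s < r) (hrm : r ≤ m) :
    (∑ j ∈ Finset.Ico l m, d j) * ((r:ℝ) - (s:ℝ))
      ≤ (∑ j ∈ Finset.Ico s r, d j) * ((m:ℝ) - (l:ℝ)) := by
  have block : ∀ a b c : ℕ, a ≤ b → b ≤ c → c ≤ m →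
      (∑ j ∈ Finset.Ico b c, d j) * ((b:ℝ) - (a:ℝ))
        ≤ (∑ j ∈ Finset.Ico a b, d j) * ((c:ℝ) - (b:ℝ)) := by
    intro a b c hab hbc hcm
    have h1 : (∑ j ∈ Finset.Ico b c, d j) * ((b:ℝ) - (a:ℝ))
        = ∑ _i ∈ Finset.Ico a b, ∑ j ∈ Finset.Ico b c, d j := by
      rw [Finset.sum_const, nsmul_eq_mul, Nat.card_Ico, Nat.cast_sub hab]; ring
    have h2 : (∑ j ∈ Finset.Ico a b, d j) * ((c:ℝ) - (b:ℝ))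
        = ∑ i ∈ Finset.Ico a b, (((c:ℝ) - (b:ℝ)) * d i) := by
      rw [← Finset.mul_sum]; ring
    rw [h1, h2]
    refine Finset.sum_le_sum fun i hi => ?_
    rw [Finset.mem_Ico] at hi
    calc ∑ j ∈ Finset.Ico b c, d j ≤ ∑ j ∈ Finset.Ico b c, d i := by
          refine Finset.sum_le_sum fun j hj => ?_
          rw [Finset.mem_Ico] at hj
          exact hmono i j (by omega) (by omega)
    _ = ((c:ℝ) - (b:ℝ)) * d i := by
          rw [Finset.sum_const, nsmul_eq_mul, Nat.card_Ico, Nat.cast_sub hbc]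
  have hlm' : l ≤ m := hlm.le
  have hsm : s ≤ m := le_trans hsl hlm'
  have hsr' : s ≤ r := hsr.le
  have eA : (∑ j ∈ Finset.Ico s m, d j)
      = (∑ j ∈ Finset.Ico s l, d j) + (∑ j ∈ Finset.Ico l m, d j) :=
    (Finset.sum_Ico_consecutive d hsl hlm').symm
  have eB : (∑ j ∈ Finset.Ico s m, d j)
      = (∑ j ∈ Finset.Ico s r, d j) + (∑ j ∈ Finset.Ico r m, d j) :=
    (Finset.sum_Ico_consecutive d hsr' hrm).symm
  have stepA : (∑ j ∈ Finset.Ico l m, d j) * ((m:ℝ) - (s:ℝ))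
      ≤ (∑ j ∈ Finset.Ico s m, d j) * ((m:ℝ) - (l:ℝ)) := by
    have hb := block s l m hsl hlm' le_rfl
    calc (∑ j ∈ Finset.Ico l m, d j) * ((m:ℝ) - (s:ℝ))
        = (∑ j ∈ Finset.Ico l m, d j) * ((l:ℝ) - (s:ℝ))
          + (∑ j ∈ Finset.Ico l m, d j) * ((m:ℝ) - (l:ℝ)) := by ring
    _ ≤ (∑ j ∈ Finset.Ico s l, d j) * ((m:ℝ) - (l:ℝ))
          + (∑ j ∈ Finset.Ico l m, d j) * ((m:ℝ) - (l:ℝ)) := by linarith [hb]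
    _ = (∑ j ∈ Finset.Ico s m, d j) * ((m:ℝ) - (l:ℝ)) := by rw [eA]; ring
  have stepB : (∑ j ∈ Finset.Ico s m, d j) * ((r:ℝ) - (s:ℝ))
      ≤ (∑ j ∈ Finset.Ico s r, d j) * ((m:ℝ) - (s:ℝ)) := by
    have hb := block s r m hsr' hrm le_rfl
    calc (∑ j ∈ Finset.Ico s m, d j) * ((r:ℝ) - (s:ℝ))
        = (∑ j ∈ Finset.Ico s r, d j) * ((r:ℝ) - (s:ℝ))
          + (∑ j ∈ Finset.Ico r m, d j) * ((r:ℝ) - (s:ℝ)) := by rw [eB]; ring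
    _ ≤ (∑ j ∈ Finset.Ico s r, d j) * ((r:ℝ) - (s:ℝ))
          + (∑ j ∈ Finset.Ico s r, d j) * ((m:ℝ) - (r:ℝ)) := by linarith [hb]
    _ = (∑ j ∈ Finset.Ico s r, d j) * ((m:ℝ) - (s:ℝ)) := by ring
  have hms : (0:ℝ) < (m:ℝ) - (s:ℝ) := by
    have : s < m := lt_of_le_of_lt hsl hlm
    have := (Nat.cast_lt (α := ℝ)).2 this
    linarith
  have hrs0 : (0:ℝ) ≤ (r:ℝ) - (s:ℝ) := by
    have := (Nat.cast_le (α := ℝ)).2 hsr'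
    linarith
  have hml0 : (0:ℝ) ≤ (m:ℝ) - (l:ℝ) := by
    have := (Nat.cast_le (α := ℝ)).2 hlm'
    linarith
  have h1 := mul_le_mul_of_nonneg_right stepA hrs0
  have h2 := mul_le_mul_of_nonneg_right stepB hml0
  have h3 : (∑ j ∈ Finset.Ico l m, d j) * ((r:ℝ) - (s:ℝ)) * ((m:ℝ) - (s:ℝ))
      ≤ (∑ j ∈ Finset.Ico s r, d j) * ((m:ℝ) - (l:ℝ)) * ((m:ℝ) - (s:ℝ)) := by
    nlinarith [h1, h2]
  exact le_of_mul_le_mul_right h3 hms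

lemma telescope (q : ℕ → ℝ) {a b : ℕ} (hab : a ≤ b) :
    q b - q a = ∑ j ∈ Finset.Ico a b, (q (j+1) - q j) := by
  rw [Finset.sum_Ico_eq_sub _ hab, Finset.sum_range_sub, Finset.sum_range_sub]
  ring

/-- Generalized Newton–MacLaurin inequality. -/
theorem newton_maclaurin {n m l r s : ℕ} {lam : Fin n → ℝ}
    (hlam : lam ∈ (Gamma m : Set (Fin n → ℝ)))
    (hml : l < m) (hrs : s < r) (hmr : r ≤ m) (hls : s ≤ l) (hmn : m ≤ n) :
    ((sigma' m lam / (n.choose m : ℝ)) / (sigma' l lam / (n.choose l : ℝ))) ^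
        ((1 : ℝ) / ((m : ℝ) - (l : ℝ))) ≤
      ((sigma' r lam / (n.choose r : ℝ)) / (sigma' s lam / (n.choose s : ℝ))) ^
        ((1 : ℝ) / ((r : ℝ) - (s : ℝ))) := by
  set p : ℕ → ℝ := fun j => sigma' j lam / (n.choose j : ℝ) with hp
  have hppos : ∀ j, j ≤ m → 0 < p j := by
    intro j hj
    rcases Nat.eq_zero_or_pos j with h0 | h1
    · subst h0
      have : p 0 = 1 := by rw [hp]; simp [sigma'_zero]
      rw [this]; norm_num
    · exact div_pos (hlam j h1 hj)
        (by exact_mod_cast Nat.choose_pos (le_trans hj hmn))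
  set q : ℕ → ℝ := fun j => Real.log (p j) with hq
  set D : ℕ → ℝ := fun j => q (j+1) - q j with hD
  have hstep : ∀ j, 1 ≤ j → j + 1 ≤ m → D j ≤ D (j-1) := by
    intro j h1 h2
    have hnp := newton_p lam h1 (le_trans h2 hmn)
    have hq1 : 0 < p (j-1) := hppos (j-1) (by omega)
    have hq2 : 0 < p (j+1) := hppos (j+1) h2
    have hq3 : 0 < p j := hppos j (by omega)
    have hnp' : p (j-1) * p (j+1) ≤ p j ^ 2 := hnp
    have hl := Real.log_le_log (mul_pos hq1 hq2) hnp'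
    rw [Real.log_mul (ne_of_gt hq1) (ne_of_gt hq2), Real.log_pow] at hl
    have hlog : q (j-1) + q (j+1) ≤ 2 * q j := by
      simp only [hq]
      push_cast at hl
      linarith [hl]
    have hj1 : j - 1 + 1 = j := by omega
    simp only [hD, hj1]
    linarith [hlog]
  have hmono : ∀ i j, i ≤ j → j + 1 ≤ m → D j ≤ D i := by
    intro i j hij hjm
    induction j with
    | zero =>
      have : i = 0 := by omega
      subst this; exact le_rfl
    | succ j ih =>
      rcases Nat.eq_or_lt_of_le hij with h | h
      · subst h; exact le_rfl
      · have hij' : i ≤ j := by omega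
        have hs := hstep (j+1) (by omega) (by omega)
        simp only [Nat.add_sub_cancel] at hs
        exact le_trans hs (ih hij' (by omega))
  have hchain := slope_chain m D hmono hls hml hrs hmr
  have htel1 : q m - q l = ∑ j ∈ Finset.Ico l m, D j := telescope q hml.le
  have htel2 : q r - q s = ∑ j ∈ Finset.Ico s r, D j := telescope q hrs.le
  have hml' : (0:ℝ) < (m:ℝ) - (l:ℝ) := by
    have := (Nat.cast_lt (α := ℝ)).2 hml
    linarith
  have hrs' : (0:ℝ) < (r:ℝ) - (s:ℝ) := by
    have := (Nat.cast_lt (α := ℝ)).2 hrs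
    linarith
  have hpm : 0 < p m := hppos m le_rfl
  have hpl : 0 < p l := hppos l hml.le
  have hpr : 0 < p r := hppos r hmr
  have hps : 0 < p s := hppos s (by omega)
  rw [Real.rpow_def_of_pos (div_pos hpm hpl), Real.rpow_def_of_pos (div_pos hpr hps)]
  rw [Real.exp_le_exp]
  rw [Real.log_div (ne_of_gt hpm) (ne_of_gt hpl), Real.log_div (ne_of_gt hpr) (ne_of_gt hps)]
  have hgoal : (q m - q l) * ((1:ℝ) / ((m:ℝ) - (l:ℝ)))
      ≤ (q r - q s) * ((1:ℝ) / ((r:ℝ) - (s:ℝ))) := by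
    rw [mul_one_div, mul_one_div, div_le_div_iff₀ hml' hrs']
    rw [htel1, htel2]
    exact hchain
  exact hgoal
end

section
/- For 0 ≤ l < k ≤ n, the function f(λ) = (σ_k(λ)/σ_l(λ))^{1/(k-l)} is concave on the Garding cone Γ_k. -/
set_option linter.unusedSectionVars false
set_option maxHeartbeats 1000000


open Finset Polynomial

namespace Gq


variable {ι : Type*} [DecidableEq ι]

noncomputable def E (k : ℕ) (A : Finset ι) (x : ι → ℝ) : ℝ :=
  ∑ s ∈ A.powersetCard k, ∏ i ∈ s, x i

lemma E_zero (A : Finset ι) (x : ι → ℝ) : E 0 A x = 1 := by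
  simp [E]

lemma E_eq_zero {k : ℕ} {A : Finset ι} (h : A.card < k) (x : ι → ℝ) : E k A x = 0 := by
  simp [E, Finset.powersetCard_eq_empty.2 h]

lemma card_le_of_E_pos {k : ℕ} {A : Finset ι} {x : ι → ℝ} (h : 0 < E k A x) : k ≤ A.card := by
  by_contra hc
  rw [E_eq_zero (by omega) x] at h
  exact lt_irrefl 0 h

lemma E_one_fun (k : ℕ) (A : Finset ι) : E k A (fun _ => (1:ℝ)) = (A.card.choose k : ℝ) := by
  simp [E, Finset.card_powersetCard]

lemma E_one (A : Finset ι) (x : ι → ℝ) : E 1 A x = ∑ i ∈ A, x i := by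
  simp [E, Finset.powersetCard_one, Finset.sum_map]

lemma E_smul (k : ℕ) (A : Finset ι) (x : ι → ℝ) (c : ℝ) :
    E k A (fun i => c * x i) = c ^ k * E k A x := by
  rw [E, E, Finset.mul_sum]
  refine Finset.sum_congr rfl fun s hs => ?_
  rw [Finset.prod_mul_distrib, Finset.prod_const, (Finset.mem_powersetCard.1 hs).2]

/-- splitting off one index -/
lemma E_erase {i : ι} {A : Finset ι} (hi : i ∈ A) (k : ℕ) (x : ι → ℝ) :
    E (k+1) A x = x i * E k (A.erase i) x + E (k+1) (A.erase i) x := by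
  conv_lhs => rw [E, ← Finset.insert_erase hi,
    Finset.powersetCard_succ_insert (Finset.notMem_erase i A) k]
  rw [Finset.sum_union, add_comm]
  · congr 1
    rw [Finset.sum_image, E, Finset.mul_sum]
    · refine Finset.sum_congr rfl fun t ht => ?_
      rw [Finset.prod_insert]
      intro hit
      exact (Finset.notMem_erase i A) ((Finset.mem_powersetCard.1 ht).1 hit)
    · intro t ht u hu h
      have hit : i ∉ t := fun hit => (Finset.notMem_erase i A) ((Finset.mem_powersetCard.1 ht).1 hit)
      have hiu : i ∉ u := fun hiu => (Finset.notMem_erase i A) ((Finset.mem_powersetCard.1 hu).1 hiu)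
      rw [← Finset.erase_insert hit, ← Finset.erase_insert hiu, h]
  · rw [Finset.disjoint_right]
    intro s hs hs'
    obtain ⟨t, ht, rfl⟩ := Finset.mem_image.1 hs
    exact (Finset.notMem_erase i A) ((Finset.mem_powersetCard.1 hs').1 (Finset.mem_insert_self i t))



/-- I2 : (k+1) * E (k+1) = ∑_i x i E k (A \ i) -/
lemma sum_mul_E_erase (k : ℕ) (A : Finset ι) (x : ι → ℝ) :
    ∑ i ∈ A, x i * E k (A.erase i) x = ((k:ℝ)+1) * E (k+1) A x := by
  have h1 : ∑ i ∈ A, x i * E k (A.erase i) x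
      = ∑ p ∈ A.sigma (fun i => (A.erase i).powersetCard k), x p.1 * ∏ j ∈ p.2, x j := by
    rw [Finset.sum_sigma]
    simp [E, Finset.mul_sum]
  rw [h1]
  have h2 : ∑ p ∈ A.sigma (fun i => (A.erase i).powersetCard k), x p.1 * ∏ j ∈ p.2, x j
      = ∑ p ∈ (A.powersetCard (k+1)).sigma (fun s => s), ∏ j ∈ p.1, x j := by
    refine Finset.sum_nbij' (fun p => ⟨insert p.1 p.2, p.1⟩) (fun q => ⟨q.2, q.1.erase q.2⟩)
      ?_ ?_ ?_ ?_ ?_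
    · rintro ⟨i, t⟩ hp
      rw [Finset.mem_sigma] at hp
      obtain ⟨hiA, ht⟩ := hp
      rw [Finset.mem_powersetCard] at ht
      have hit : i ∉ t := fun h => (Finset.notMem_erase i A) (ht.1 h)
      refine Finset.mem_sigma.2 ⟨Finset.mem_powersetCard.2 ⟨?_, ?_⟩, Finset.mem_insert_self _ _⟩
      · exact Finset.insert_subset hiA (ht.1.trans (Finset.erase_subset _ _))
      · rw [Finset.card_insert_of_notMem hit, ht.2]
    · rintro ⟨s, i⟩ hq
      rw [Finset.mem_sigma, Finset.mem_powersetCard] at hq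
      obtain ⟨⟨hsA, hsc⟩, his⟩ := hq
      refine Finset.mem_sigma.2 ⟨hsA his, Finset.mem_powersetCard.2 ⟨?_, ?_⟩⟩
      · exact Finset.erase_subset_erase _ hsA
      · rw [Finset.card_erase_of_mem his, hsc]; rfl
    · rintro ⟨i, t⟩ hp
      rw [Finset.mem_sigma] at hp
      have hit : i ∉ t := fun h =>
        (Finset.notMem_erase i A) ((Finset.mem_powersetCard.1 hp.2).1 h)
      simp [Finset.erase_insert hit]
    · rintro ⟨s, i⟩ hq
      rw [Finset.mem_sigma] at hq
      simp [Finset.insert_erase hq.2]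
    · rintro ⟨i, t⟩ hp
      rw [Finset.mem_sigma] at hp
      have hit : i ∉ t := fun h =>
        (Finset.notMem_erase i A) ((Finset.mem_powersetCard.1 hp.2).1 h)
      simp [Finset.prod_insert hit]
  rw [h2, Finset.sum_sigma]
  rw [E, Finset.mul_sum]
  refine Finset.sum_congr rfl fun s hs => ?_
  have : ∀ i ∈ s, (∏ j ∈ (⟨s, i⟩ : Σ _ : Finset ι, ι).fst, x j) = ∏ j ∈ s, x j :=
    fun _ _ => rfl
  rw [Finset.sum_congr rfl this, Finset.sum_const, (Finset.mem_powersetCard.1 hs).2,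
    nsmul_eq_mul]
  push_cast
  ring

/-- counting supersets -/
lemma count_supersets {A t : Finset ι} (ht : t ⊆ A) {r k : ℕ} (htr : t.card = r) (hrk : r ≤ k) :
    ((A.powersetCard k).filter (fun s => t ⊆ s)).card = (A.card - r).choose (k - r) := by
  have hcard : (A \ t).card = A.card - r := by rw [Finset.card_sdiff_of_subset ht, htr]
  rw [← hcard, ← Finset.card_powersetCard (k - r) (A \ t)]
  refine Finset.card_nbij' (fun s => s \ t) (fun u => u ∪ t) ?_ ?_ ?_ ?_
  · intro s hs
    rw [Finset.mem_coe, Finset.mem_filter, Finset.mem_powersetCard] at hs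
    refine (Finset.mem_powersetCard.2 ⟨Finset.sdiff_subset_sdiff hs.1.1 le_rfl, ?_⟩)
    rw [Finset.card_sdiff_of_subset hs.2, hs.1.2, htr]
  · intro u hu
    rw [Finset.mem_coe, Finset.mem_powersetCard] at hu
    have hdis : Disjoint u t := (Finset.sdiff_disjoint).mono_left hu.1
    refine (Finset.mem_filter.2 ⟨Finset.mem_powersetCard.2 ⟨?_, ?_⟩, Finset.subset_union_right⟩)
    · exact Finset.union_subset (hu.1.trans (Finset.sdiff_subset)) ht
    · rw [Finset.card_union_of_disjoint hdis, hu.2, htr]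
      omega
  · intro s hs
    rw [Finset.mem_coe, Finset.mem_filter] at hs
    exact Finset.sdiff_union_of_subset hs.2
  · intro u hu
    rw [Finset.mem_coe, Finset.mem_powersetCard] at hu
    have hdis : Disjoint u t := (Finset.sdiff_disjoint).mono_left hu.1
    show (u ∪ t) \ t = u
    rw [Finset.union_sdiff_distrib, Finset.sdiff_self, Finset.union_empty,
      Finset.sdiff_eq_self_of_disjoint hdis]

/-- I3 : shift expansion -/
lemma E_add_const (k : ℕ) (A : Finset ι) (x : ι → ℝ) (c : ℝ) :
    E k A (fun i => x i + c)
      = ∑ r ∈ Finset.range (k+1), ((A.card - r).choose (k - r) : ℝ) * c^(k-r) * E r A x := by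
  have h1 : E k A (fun i => x i + c)
      = ∑ s ∈ A.powersetCard k, ∑ t ∈ s.powerset, (∏ i ∈ t, x i) * c^(k - t.card) := by
    rw [E]
    refine Finset.sum_congr rfl fun s hs => ?_
    rw [Finset.prod_add]
    refine Finset.sum_congr rfl fun t ht => ?_
    rw [Finset.prod_const, Finset.card_sdiff_of_subset (Finset.mem_powerset.1 ht),
      (Finset.mem_powersetCard.1 hs).2]
  rw [h1]
  rw [Finset.sum_comm' (t' := (A.powerset).filter (fun t => t.card ≤ k))
      (s' := fun t => (A.powersetCard k).filter (fun s => t ⊆ s))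
      (by
        intro s t
        constructor
        · rintro ⟨hs, ht⟩
          rw [Finset.mem_powersetCard] at hs
          rw [Finset.mem_powerset] at ht
          refine ⟨Finset.mem_filter.2 ⟨Finset.mem_powersetCard.2 hs, ht⟩,
            Finset.mem_filter.2 ⟨Finset.mem_powerset.2 (ht.trans hs.1), ?_⟩⟩
          rw [← hs.2]
          exact Finset.card_le_card ht
        · rintro ⟨hs, ht⟩
          rw [Finset.mem_filter] at hs
          exact ⟨hs.1, Finset.mem_powerset.2 hs.2⟩)]
  have h2 : ∀ t ∈ (A.powerset).filter (fun t => t.card ≤ k),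
      ∑ _s ∈ (A.powersetCard k).filter (fun s => t ⊆ s), (∏ i ∈ t, x i) * c^(k - t.card)
        = ((A.card - t.card).choose (k - t.card) : ℝ) * c^(k-t.card) * ∏ i ∈ t, x i := by
    intro t ht
    rw [Finset.mem_filter, Finset.mem_powerset] at ht
    rw [Finset.sum_const, count_supersets ht.1 rfl ht.2, nsmul_eq_mul]
    ring
  rw [Finset.sum_congr rfl h2]
  rw [← Finset.sum_fiberwise_of_maps_to (g := fun t : Finset ι => t.card)
      (t := Finset.range (k+1))
      (by
        intro t ht
        rw [Finset.mem_filter] at ht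
        have := ht.2
        show t.card ∈ Finset.range (k+1)
        rw [Finset.mem_range]
        omega)]
  refine Finset.sum_congr rfl fun r hr => ?_
  rw [Finset.mem_range] at hr
  have hfib : ((A.powerset).filter (fun t => t.card ≤ k)).filter (fun t => t.card = r)
      = A.powersetCard r := by
    rw [Finset.powersetCard_eq_filter, Finset.filter_filter]
    refine Finset.filter_congr fun t _ => ?_
    constructor
    · rintro ⟨_, h3⟩; exact h3
    · intro h3; exact ⟨by omega, h3⟩
  rw [hfib, E, Finset.mul_sum]
  refine Finset.sum_congr rfl fun t ht => ?_
  rw [(Finset.mem_powersetCard.1 ht).2]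



lemma E_card (A : Finset ι) (x : ι → ℝ) : E A.card A x = ∏ i ∈ A, x i := by
  simp [E, Finset.powersetCard_self]

lemma E_two_eq (A : Finset ι) (y : ι → ℝ) :
    E 2 A y = ((∑ i ∈ A, y i)^2 - ∑ i ∈ A, (y i)^2)/2 := by
  classical
  induction A using Finset.induction_on with
  | empty => simp [E_eq_zero (by simp : (∅ : Finset ι).card < 2)]
  | @insert a s ha ih =>
    have h2 : E 2 (insert a s) y = y a * E 1 s y + E 2 s y := by
      have := E_erase (Finset.mem_insert_self a s) 1 y
      rwa [Finset.erase_insert ha] at this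
    rw [h2, ih, E_one, Finset.sum_insert ha, Finset.sum_insert ha]
    ring

lemma E_compl {A : Finset ι} {x : ι → ℝ} (hx : ∀ i ∈ A, x i ≠ 0) {j : ℕ} (hj : j ≤ A.card) :
    E (A.card - j) A x = (∏ i ∈ A, x i) * E j A (fun i => (x i)⁻¹) := by
  rw [E, E, Finset.mul_sum]
  refine (Finset.sum_nbij' (fun u => A \ u) (fun t => A \ t) ?_ ?_ ?_ ?_ ?_).symm
  all_goals intro t ht
  · rw [Finset.mem_powersetCard] at ht ⊢
    exact ⟨Finset.sdiff_subset, by rw [Finset.card_sdiff_of_subset ht.1, ht.2]⟩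
  · rw [Finset.mem_powersetCard] at ht ⊢
    refine ⟨Finset.sdiff_subset, ?_⟩
    rw [Finset.card_sdiff_of_subset ht.1, ht.2]
    omega
  · rw [Finset.mem_powersetCard] at ht
    exact Finset.sdiff_sdiff_eq_self ht.1
  · rw [Finset.mem_powersetCard] at ht
    exact Finset.sdiff_sdiff_eq_self ht.1
  · rw [Finset.mem_powersetCard] at ht
    have hsub : (∏ i ∈ A \ t, x i) * ∏ i ∈ t, x i = ∏ i ∈ A, x i := Finset.prod_sdiff ht.1
    have hne : (∏ i ∈ t, x i) ≠ 0 :=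
      Finset.prod_ne_zero_iff.2 fun i hi => hx i (ht.1 hi)
    rw [Finset.prod_inv_distrib]
    field_simp
    linarith [hsub]

/-- kernel : full-cardinality qualitative Newton -/
lemma kernel {A : Finset ι} {x : ι → ℝ} (hx : ∀ i ∈ A, x i ≠ 0) (hk : 2 ≤ A.card)
    (h1 : E (A.card - 1) A x = 0) : E A.card A x * E (A.card - 2) A x ≤ 0 := by
  have hprod : (∏ i ∈ A, x i) ≠ 0 := Finset.prod_ne_zero_iff.2 hx
  have hc1 : E (A.card - 1) A x = (∏ i ∈ A, x i) * E 1 A (fun i => (x i)⁻¹) :=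
    E_compl hx (by omega)
  have hinv1 : E 1 A (fun i => (x i)⁻¹) = 0 := by
    rcases mul_eq_zero.1 (hc1 ▸ h1) with h | h
    · exact absurd h hprod
    · exact h
  have hc2 : E (A.card - 2) A x = (∏ i ∈ A, x i) * E 2 A (fun i => (x i)⁻¹) :=
    E_compl hx (by omega)
  have h2le : E 2 A (fun i => (x i)⁻¹) ≤ 0 := by
    have hs : (∑ i ∈ A, (x i)⁻¹) = 0 := by rw [← E_one A fun i => (x i)⁻¹]; exact hinv1
    rw [E_two_eq, hs]
    have : (0:ℝ) ≤ ∑ i ∈ A, ((x i)⁻¹)^2 := Finset.sum_nonneg fun i _ => sq_nonneg _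
    nlinarith
  rw [hc2, E_card]
  nlinarith [sq_nonneg (∏ i ∈ A, x i)]

/-- iterated derivatives of a real-rooted polynomial are real-rooted -/
lemma iterate_deriv_realrooted (p : ℝ[X]) (hp : Multiset.card p.roots = p.natDegree) :
    ∀ r : ℕ, r ≤ p.natDegree →
      (derivative^[r] p).natDegree = p.natDegree - r ∧
      Multiset.card (derivative^[r] p).roots = p.natDegree - r := by
  intro r
  induction r with
  | zero => intro _; simp [hp]
  | succ r ih =>
    intro hr
    obtain ⟨hd, hc⟩ := ih (by omega)
    set q := derivative^[r] p with hq
    have hqd : 0 < q.natDegree := by omega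
    have hqne : q ≠ 0 := fun h => by rw [h, natDegree_zero] at hqd; omega
    have hlead : q.coeff q.natDegree ≠ 0 := by
      rw [← Polynomial.leadingCoeff]
      exact Polynomial.leadingCoeff_ne_zero.2 hqne
    have hco : (derivative q).coeff (q.natDegree - 1) ≠ 0 := by
      rw [Polynomial.coeff_derivative]
      have : q.natDegree - 1 + 1 = q.natDegree := by omega
      rw [this]
      push_cast
      intro hcontra
      rcases mul_eq_zero.1 hcontra with h | h
      · exact hlead h
      · have : (0:ℝ) < (q.natDegree - 1 : ℕ) + 1 := by positivity
        rw [h] at this; exact lt_irrefl 0 this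
    have hdle : (derivative q).natDegree ≤ q.natDegree - 1 := by
      have := Polynomial.natDegree_derivative_lt (p := q) (by omega)
      omega
    have hdge : q.natDegree - 1 ≤ (derivative q).natDegree :=
      Polynomial.le_natDegree_of_ne_zero hco
    have hdeq : (derivative q).natDegree = q.natDegree - 1 := le_antisymm hdle hdge
    have hcle : Multiset.card (derivative q).roots ≤ q.natDegree - 1 := by
      have := Polynomial.card_roots' (derivative q)
      omega
    have hcge : q.natDegree - 1 ≤ Multiset.card (derivative q).roots := by
      have := Polynomial.card_roots_le_derivative q
      omega
    have : derivative^[r+1] p = derivative q := by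
      rw [Function.iterate_succ_apply', hq]
    rw [this, hdeq, hd]
    constructor
    · omega
    · omega

lemma descFactorial_pos' (n r : ℕ) : 0 < (n + r).descFactorial r :=
  Nat.pos_of_ne_zero fun h => by
    have := Nat.descFactorial_eq_zero_iff_lt.1 h
    omega

lemma newton_qual {A : Finset ι} {x : ι → ℝ} {k : ℕ} (hk : 2 ≤ k)
    (h1 : E (k-1) A x = 0) (h2 : 0 < E k A x * E (k-2) A x) : False := by
  classical
  have hEk : E k A x ≠ 0 := fun h => by rw [h, zero_mul] at h2; exact lt_irrefl 0 h2
  have hkm : k ≤ A.card := by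
    by_contra hc
    exact hEk (E_eq_zero (by omega) x)
  set m := A.card with hm
  set P : ℝ[X] := ∏ i ∈ A, (X + C (x i)) with hP
  have hPne : ∀ i ∈ A, (X + C (x i)) ≠ 0 := fun i _ => Polynomial.X_add_C_ne_zero (x i)
  have hP0 : P ≠ 0 := Finset.prod_ne_zero_iff.2 hPne
  have hPdeg : P.natDegree = m := by
    rw [hP, Polynomial.natDegree_prod _ _ hPne]
    simp [Polynomial.natDegree_X_add_C, hm]
  have hProots : Multiset.card P.roots = m := by
    have hfac : ∀ i ∈ A, ((X:ℝ[X]) + C (x i)) = (X - C (-(x i))) := by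
      intro i _; rw [map_neg, sub_neg_eq_add]
    have hPalt : P = ∏ i ∈ A, ((X:ℝ[X]) - C (-(x i))) := Finset.prod_congr rfl hfac
    have hne : (∏ i ∈ A, ((X:ℝ[X]) - C (-(x i)))) ≠ 0 := hPalt ▸ hP0
    rw [hPalt, Polynomial.roots_prod _ _ hne]
    simp only [Polynomial.roots_X_sub_C]
    rw [Multiset.card_bind]
    simp [hm]
  have hPcoeff : ∀ j, j ≤ m → P.coeff j = E (m - j) A x := by
    intro j hj
    rw [hP, Finset.prod_X_add_C_coeff A x hj]
    rfl
  -- iterated derivative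
  set Q : ℝ[X] := derivative^[m - k] P with hQ
  obtain ⟨hQdeg, hQroots⟩ :=
    iterate_deriv_realrooted P (by rw [hProots, hPdeg]) (m - k) (by omega)
  rw [hPdeg] at hQdeg hQroots
  have hmk : m - (m - k) = k := by omega
  rw [hmk] at hQdeg hQroots
  have hQcoeff : ∀ n, n ≤ k → Q.coeff n = ((n + (m - k)).descFactorial (m-k) : ℝ) * E (k - n) A x := by
    intro n hn
    rw [hQ, Polynomial.coeff_iterate_derivative, hPcoeff (n + (m-k)) (by omega), nsmul_eq_mul]
    congr 2
    omega
  have hQ0 : Q.coeff 0 ≠ 0 := by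
    rw [hQcoeff 0 (by omega)]
    refine mul_ne_zero ?_ (by simpa using hEk)
    exact_mod_cast (descFactorial_pos' 0 (m-k)).ne'
  have hQne : Q ≠ 0 := fun h => by
    rw [h, Polynomial.coeff_zero] at hQ0; exact hQ0 rfl
  -- roots of Q are nonzero
  have hrootsne : ∀ a ∈ Q.roots, a ≠ 0 := by
    intro a ha h0
    have h' := (Polynomial.mem_roots'.1 ha).2
    rw [Polynomial.IsRoot, h0, ← Polynomial.coeff_zero_eq_eval_zero] at h'
    exact hQ0 h'
  -- factor over its roots
  have hfact := Polynomial.C_leadingCoeff_mul_prod_multiset_X_sub_C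
    (p := Q) (by rw [hQroots, hQdeg])
  set L : List ℝ := Q.roots.toList with hL
  have hLcoe : (L : Multiset ℝ) = Q.roots := Multiset.coe_toList _
  have hlen : L.length = k := by
    rw [hL, Multiset.length_toList, hQroots]
  set y : Fin L.length → ℝ := fun i => -(L.get i) with hy
  have hyne : ∀ i, y i ≠ 0 := by
    intro i h
    have hmem : L.get i ∈ Q.roots := by
      rw [← hLcoe]
      exact Multiset.mem_coe.2 (by simpa using L.get_mem i.1 i.2)
    exact hrootsne _ hmem (by rw [hy] at h; simpa using h)
  have hprodeq : (Q.roots.map fun a => (X:ℝ[X]) - C a).prod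
      = ∏ i ∈ (Finset.univ : Finset (Fin L.length)), ((X:ℝ[X]) + C (y i)) := by
    rw [← hLcoe]
    have h1' : ((L : Multiset ℝ).map fun a => (X:ℝ[X]) - C a)
        = ((L.map fun a => (X:ℝ[X]) - C a) : Multiset ℝ[X]) := by
      simp
    rw [h1', Multiset.prod_coe]
    have h2' : (L.map fun a => (X:ℝ[X]) - C a)
        = List.ofFn (fun i => (X:ℝ[X]) - C (L.get i)) := by
      conv_lhs => rw [← List.ofFn_get L]
      rw [List.map_ofFn]
      rfl
    rw [h2', List.prod_ofFn]
    refine Finset.prod_congr rfl fun i _ => ?_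
    rw [hy]
    simp [sub_eq_add_neg]
  set c : ℝ := Q.leadingCoeff with hc
  have hcne : c ≠ 0 := Polynomial.leadingCoeff_ne_zero.2 hQne
  have hQfact : Q = Polynomial.C c * ∏ i ∈ (Finset.univ : Finset (Fin L.length)),
      ((X:ℝ[X]) + C (y i)) := by
    rw [← hprodeq, hc]
    exact hfact.symm
  have hcard : (Finset.univ : Finset (Fin L.length)).card = L.length := by
    simp
  have hQcoeff' : ∀ n, n ≤ L.length →
      Q.coeff n = c * E (L.length - n) Finset.univ y := by
    intro n hn
    rw [hQfact, Polynomial.coeff_C_mul,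
      Finset.prod_X_add_C_coeff Finset.univ y (by rw [hcard]; exact hn)]
    rw [hcard]
    rfl
  -- apply the kernel
  have hE1 : E (L.length - 1) Finset.univ y = 0 := by
    have e1 := hQcoeff' 1 (by omega)
    have e2 := hQcoeff 1 (by omega)
    rw [h1, mul_zero] at e2
    rw [e2] at e1
    rcases mul_eq_zero.1 e1.symm with h | h
    · exact absurd h hcne
    · exact h
  have hker := kernel (A := (Finset.univ : Finset (Fin L.length))) (x := y)
    (fun i _ => hyne i) (by rw [hcard]; omega) (by rw [hcard]; exact hE1)
  rw [hcard] at hker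
  -- compute Q.coeff 0 * Q.coeff 2 two ways
  have q0 := hQcoeff 0 (by omega)
  have q2 := hQcoeff 2 (by omega)
  have q0' := hQcoeff' 0 (by omega)
  have q2' := hQcoeff' 2 (by omega)
  have hpos : 0 < Q.coeff 0 * Q.coeff 2 := by
    have d0 : (0:ℝ) < ((0 + (m - k)).descFactorial (m-k) : ℝ) := by
      exact_mod_cast descFactorial_pos' 0 (m-k)
    have d2 : (0:ℝ) < ((2 + (m - k)).descFactorial (m-k) : ℝ) := by
      exact_mod_cast descFactorial_pos' 2 (m-k)
    have key : Q.coeff 0 * Q.coeff 2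
        = (((0 + (m - k)).descFactorial (m-k) : ℝ) * ((2 + (m - k)).descFactorial (m-k) : ℝ))
          * (E k A x * E (k-2) A x) := by
      rw [q0, q2, Nat.sub_zero]
      ring
    rw [key]
    exact mul_pos (mul_pos d0 d2) h2
  have hneg : Q.coeff 0 * Q.coeff 2 ≤ 0 := by
    rw [q0', q2']
    have : E (L.length - 0) Finset.univ y = E L.length Finset.univ y := by norm_num
    rw [this]
    nlinarith [hker, sq_nonneg c]
  linarith



def GammaA (k : ℕ) (A : Finset ι) : Set (ι → ℝ) :=
  {x | ∀ j, 1 ≤ j → j ≤ k → 0 < E j A x}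

-- placeholders proved in other modules
lemma GammaA_mono {k j : ℕ} {A : Finset ι} (h : j ≤ k) {x : ι → ℝ} (hx : x ∈ GammaA k A) :
    x ∈ GammaA j A := fun r hr1 hrj => hx r hr1 (hrj.trans h)

lemma E_pos_of_mem {k j : ℕ} {A : Finset ι} {x : ι → ℝ} (hx : x ∈ GammaA k A) (hj : j ≤ k) :
    0 < E j A x := by
  rcases Nat.eq_zero_or_pos j with rfl | hj0
  · rw [E_zero]; norm_num
  · exact hx j hj0 hj

/-- the straight segment from `x` to `𝟙` stays in the cone -/
lemma path_mem {k : ℕ} (hk : 1 ≤ k) {A : Finset ι} {x : ι → ℝ} (hx : x ∈ GammaA k A)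
    {t : ℝ} (ht0 : 0 ≤ t) (ht1 : t ≤ 1) :
    (fun i => (1-t) * x i + t) ∈ GammaA k A := by
  have hkA : k ≤ A.card := card_le_of_E_pos (hx k hk le_rfl)
  intro j hj1 hjk
  have hjA : j ≤ A.card := hjk.trans hkA
  rw [E_add_const j A (fun i => (1-t) * x i) t]
  have hterm : ∀ r ∈ Finset.range (j+1),
      0 ≤ ((A.card - r).choose (j - r) : ℝ) * t^(j-r) * E r A (fun i => (1-t) * x i) := by
    intro r hr
    rw [Finset.mem_range] at hr
    rw [E_smul]
    have h1 : (0:ℝ) ≤ ((A.card - r).choose (j - r) : ℝ) := Nat.cast_nonneg _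
    have h2 : (0:ℝ) ≤ t^(j-r) := pow_nonneg ht0 _
    have h3 : (0:ℝ) ≤ (1-t)^r := pow_nonneg (by linarith) _
    have h4 : 0 < E r A x := E_pos_of_mem hx (by omega)
    positivity
  rcases lt_or_ge t 1 with htlt | htge
  · refine Finset.sum_pos' hterm ⟨j, Finset.self_mem_range_succ j, ?_⟩
    rw [E_smul]
    have h4 : 0 < E j A x := E_pos_of_mem hx hjk
    have : ((A.card - j).choose (j - j) : ℝ) = 1 := by simp
    rw [this]
    have h3 : (0:ℝ) < (1-t)^j := pow_pos (by linarith) _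
    simp only [Nat.sub_self, pow_zero, mul_one, one_mul]
    exact mul_pos h3 h4
  · have ht : (0:ℝ) < t := by linarith
    refine Finset.sum_pos' hterm ⟨0, by simp, ?_⟩
    rw [E_smul, E_zero]
    have h1 : (0:ℝ) < ((A.card - 0).choose (j - 0) : ℝ) := by
      simp only [Nat.sub_zero]
      exact_mod_cast Nat.choose_pos hjA
    have h2 : (0:ℝ) < t^(j-0) := pow_pos ht _
    simp only [Nat.sub_zero, pow_zero, mul_one, one_mul] at *
    exact mul_pos h1 h2

lemma E_continuous (k : ℕ) (A : Finset ι) (x : ι → ℝ) :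
    Continuous (fun t : ℝ => E k A (fun i => (1-t) * x i + t)) := by
  unfold E
  apply continuous_finset_sum
  intro s _
  apply continuous_finset_prod
  intro i _
  fun_prop

/-- Deletion lemma: removing an index drops the cone index by one. -/
lemma deletion : ∀ (k : ℕ) {A : Finset ι} {i : ι}, i ∈ A → ∀ {x : ι → ℝ},
    x ∈ GammaA k A → x ∈ GammaA (k-1) (A.erase i) := by
  intro k
  induction k using Nat.strong_induction_on with
  | _ k ih =>
    intro A i hi x hx
    match k, hx with
    | 0, hx => exact fun j hj1 hj0 => absurd (hj1.trans hj0) (by omega)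
    | 1, hx => exact fun j hj1 hj0 => absurd (hj1.trans hj0) (by omega)
    | (k'+2), hx => ?_
    intro j hj1 hjk
    rcases Nat.lt_or_ge j (k'+1) with hjlt | hjge
    · -- j ≤ k' : use induction hypothesis at level k'+1
      have hx' : x ∈ GammaA (k'+1) A := GammaA_mono (by omega) hx
      have := ih (k'+1) (by omega) hi hx'
      exact this j hj1 (by omega)
    · -- j = k'+1 : the real case
      have hj : j = k'+1 := by omega
      subst hj
      -- non-vanishing of E (k'+1) (A.erase i) on the cone
      have noZero : ∀ z : ι → ℝ, z ∈ GammaA (k'+2) A → E (k'+1) (A.erase i) z ≠ 0 := by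
        intro z hz hzero
        have hz' : z ∈ GammaA (k'+1) A := GammaA_mono (by omega) hz
        have hdel : z ∈ GammaA k' (A.erase i) := by
          have := ih (k'+1) (by omega) hi hz'
          simpa using this
        have hk'pos : 0 < E k' (A.erase i) z := E_pos_of_mem hdel le_rfl
        have hEk2 : 0 < E (k'+2) (A.erase i) z := by
          have hsplit := E_erase hi (k'+1) z
          rw [hzero, mul_zero] at hsplit
          have := hz (k'+2) (by omega) le_rfl
          linarith
        exact newton_qual (A := A.erase i) (k := k'+2) (by omega)
          (by simpa using hzero) (by simpa using mul_pos hEk2 hk'pos)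
      -- IVT along the segment to 𝟙
      set h : ℝ → ℝ := fun t => E (k'+1) (A.erase i) (fun j => (1-t) * x j + t) with hh
      have hcont : Continuous h := E_continuous (k'+1) (A.erase i) x
      have hone : 0 < h 1 := by
        have : (fun j => (1-(1:ℝ)) * x j + 1) = (fun _ : ι => (1:ℝ)) := by
          funext j; ring
        rw [hh]
        simp only [this]
        rw [E_one_fun]
        have hkA : k'+2 ≤ A.card := card_le_of_E_pos (hx (k'+2) (by omega) le_rfl)
        have : k'+1 ≤ (A.erase i).card := by
          rw [Finset.card_erase_of_mem hi]; omega
        exact_mod_cast Nat.choose_pos this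
      have hnz : ∀ t : ℝ, 0 ≤ t → t ≤ 1 → h t ≠ 0 := by
        intro t ht0 ht1
        exact noZero _ (path_mem (by omega) hx ht0 ht1)
      have hzero_x : h 0 ≠ 0 := by
        have := hnz 0 le_rfl (by norm_num)
        exact this
      have hx0 : h 0 = E (k'+1) (A.erase i) x := by
        have hfe : (fun j => (1-(0:ℝ)) * x j + 0) = x := by funext j; ring
        rw [hh]
        simp only [hfe]
      rw [← hx0]
      rcases lt_or_ge 0 (h 0) with hpos | hneg
      · exact hpos
      · exfalso
        have hlt : h 0 < 0 := lt_of_le_of_ne hneg hzero_x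
        have hIVT := intermediate_value_Icc (by norm_num : (0:ℝ) ≤ 1) hcont.continuousOn
        have h0mem : (0:ℝ) ∈ Set.Icc (h 0) (h 1) := ⟨le_of_lt hlt, le_of_lt hone⟩
        obtain ⟨t, htmem, hteq⟩ := hIVT h0mem
        exact hnz t htmem.1 htmem.2 hteq



lemma phi_ineq {u v g h G : ℝ} (hug : 0 < u + g) (hvh : 0 < v + h) (hG : g + h ≤ G) :
    (u+v)^2/(u+v+G) ≤ u^2/(u+g) + v^2/(v+h) := by
  have hD : 0 < u + v + G := by linarith
  rw [div_add_div _ _ (ne_of_gt hug) (ne_of_gt hvh), div_le_div_iff₀ hD (mul_pos hug hvh)]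
  have hnum : 0 ≤ u^2*(v+h) + v^2*(u+g) :=
    add_nonneg (mul_nonneg (sq_nonneg u) hvh.le) (mul_nonneg (sq_nonneg v) hug.le)
  nlinarith [sq_nonneg (u*(v+h) - v*(u+g)), mul_nonneg hnum (by linarith : (0:ℝ) ≤ G - (g+h))]

lemma term_le {cx cy cz gx gy gz u v : ℝ} (hcx : 0 < cx) (hcy : 0 < cy) (hcz : 0 < cz)
    (hdx : 0 < u * cx + gx) (hdy : 0 < v * cy + gy)
    (hsup : gx/cx + gy/cy ≤ gz/cz) :
    (u+v)^2 * cz / ((u+v)*cz + gz) ≤ u^2*cx/(u*cx+gx) + v^2*cy/(v*cy+gy) := by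
  have hug : 0 < u + gx/cx := by
    have : u + gx/cx = (u*cx+gx)/cx := by field_simp
    rw [this]; exact div_pos hdx hcx
  have hvh : 0 < v + gy/cy := by
    have : v + gy/cy = (v*cy+gy)/cy := by field_simp
    rw [this]; exact div_pos hdy hcy
  have e1 : u^2*cx/(u*cx+gx) = u^2/(u+gx/cx) := by
    rw [show u*cx+gx = cx*(u+gx/cx) by field_simp,
      show u^2*cx = cx * u^2 by ring, mul_div_mul_left _ _ (ne_of_gt hcx)]
  have e2 : v^2*cy/(v*cy+gy) = v^2/(v+gy/cy) := by
    rw [show v*cy+gy = cy*(v+gy/cy) by field_simp,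
      show v^2*cy = cy * v^2 by ring, mul_div_mul_left _ _ (ne_of_gt hcy)]
  have e3 : (u+v)^2*cz/((u+v)*cz+gz) = (u+v)^2/(u+v+gz/cz) := by
    rw [show (u+v)*cz+gz = cz*((u+v)+gz/cz) by field_simp,
      show (u+v)^2*cz = cz * (u+v)^2 by ring, mul_div_mul_left _ _ (ne_of_gt hcz)]
  rw [e1, e2, e3]
  exact phi_ineq hug hvh hsup

/-- basic identity L -/
lemma L_identity (k' : ℕ) (A : Finset ι) (w : ι → ℝ) :
    ((k':ℝ)+2) * E (k'+2) A w
      = E 1 A w * E (k'+1) A w - ∑ i ∈ A, (w i)^2 * E k' (A.erase i) w := by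
  have h2 := sum_mul_E_erase (k'+1) A w
  have h3 : ∀ i ∈ A, w i * E (k'+1) (A.erase i) w
      = w i * E (k'+1) A w - (w i)^2 * E k' (A.erase i) w := by
    intro i hi
    have he := E_erase hi k' w
    have : E (k'+1) (A.erase i) w = E (k'+1) A w - w i * E k' (A.erase i) w := by linarith
    rw [this]; ring
  rw [Finset.sum_congr rfl h3, Finset.sum_sub_distrib, ← Finset.sum_mul, ← E_one A w] at h2
  push_cast at h2 ⊢
  linarith

lemma Kratio (k' : ℕ) (A : Finset ι) (w : ι → ℝ) (hw : 0 < E (k'+1) A w) :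
    ((k':ℝ)+2) * (E (k'+2) A w / E (k'+1) A w)
      = E 1 A w - ∑ i ∈ A, (w i)^2 * E k' (A.erase i) w / E (k'+1) A w := by
  have hL := L_identity k' A w
  rw [← Finset.sum_div]
  rw [show E 1 A w - (∑ i ∈ A, (w i)^2 * E k' (A.erase i) w) / E (k'+1) A w
      = (E 1 A w * E (k'+1) A w - ∑ i ∈ A, (w i)^2 * E k' (A.erase i) w) / E (k'+1) A w by
    field_simp]
  rw [← hL, mul_div_assoc]

/-- The main induction: additivity of the cone and superadditivity of the quotient. -/
lemma main_induction : ∀ (k : ℕ) (A : Finset ι) (x y : ι → ℝ),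
    x ∈ GammaA k A → y ∈ GammaA k A →
    ((fun i => x i + y i) ∈ GammaA k A) ∧
    (1 ≤ k → E k A x / E (k-1) A x + E k A y / E (k-1) A y
        ≤ E k A (fun i => x i + y i) / E (k-1) A (fun i => x i + y i)) := by
  intro k
  induction k using Nat.strong_induction_on with
  | _ k ih =>
    intro A x y hx hy
    match k with
    | 0 =>
      refine ⟨fun j hj1 hj0 => absurd (hj1.trans hj0) (by omega), fun h => absurd h (by omega)⟩
    | 1 =>
      constructor
      · intro j hj1 hjk
        have hj : j = 1 := by omega
        subst hj
        have hx' := hx 1 le_rfl le_rfl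
        have hy' := hy 1 le_rfl le_rfl
        rw [E_one] at hx' hy'
        rw [E_one, Finset.sum_add_distrib]
        linarith
      · intro _
        simp only [Nat.sub_self, E_zero, div_one]
        rw [E_one, E_one, E_one, Finset.sum_add_distrib]
    | (k'+2) =>
      -- notation
      set z : ι → ℝ := fun i => x i + y i with hz
      have hx1 : x ∈ GammaA (k'+1) A := GammaA_mono (by omega) hx
      have hy1 : y ∈ GammaA (k'+1) A := GammaA_mono (by omega) hy
      have ihm := (ih (k'+1) (by omega) A x y hx1 hy1).1
      have hEx1 : 0 < E (k'+1) A x := E_pos_of_mem hx1 le_rfl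
      have hEy1 : 0 < E (k'+1) A y := E_pos_of_mem hy1 le_rfl
      have hEz1 : 0 < E (k'+1) A z := E_pos_of_mem ihm le_rfl
      -- superadditivity
      have hsuper : E (k'+2) A x / E (k'+1) A x + E (k'+2) A y / E (k'+1) A y
          ≤ E (k'+2) A z / E (k'+1) A z := by
        have hK : (0:ℝ) < (k':ℝ)+2 := by positivity
        rw [← mul_le_mul_iff_right₀ hK]
        have kx := Kratio k' A x hEx1
        have ky := Kratio k' A y hEy1
        have kz := Kratio k' A z hEz1
        have hE1 : E 1 A z = E 1 A x + E 1 A y := by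
          rw [E_one, E_one, E_one, Finset.sum_add_distrib]
        have hSum : ∑ i ∈ A, (z i)^2 * E k' (A.erase i) z / E (k'+1) A z
            ≤ (∑ i ∈ A, (x i)^2 * E k' (A.erase i) x / E (k'+1) A x)
              + ∑ i ∈ A, (y i)^2 * E k' (A.erase i) y / E (k'+1) A y := by
          rw [← Finset.sum_add_distrib]
          refine Finset.sum_le_sum fun i hi => ?_
          -- deletions
          have hxdel : x ∈ GammaA (k'+1) (A.erase i) := by
            have := deletion (k'+2) hi hx
            simpa using this
          have hydel : y ∈ GammaA (k'+1) (A.erase i) := by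
            have := deletion (k'+2) hi hy
            simpa using this
          have hzdel : z ∈ GammaA k' (A.erase i) := by
            have := deletion (k'+1) hi ihm
            simpa using this
          have hcx : 0 < E k' (A.erase i) x := E_pos_of_mem hxdel (by omega)
          have hcy : 0 < E k' (A.erase i) y := E_pos_of_mem hydel (by omega)
          have hcz : 0 < E k' (A.erase i) z := E_pos_of_mem hzdel le_rfl
          have hsub := (ih (k'+1) (by omega) (A.erase i) x y hxdel hydel).2 (by omega)
          simp only [Nat.add_sub_cancel] at hsub
          -- rewrite denominators
          rw [E_erase hi k' x, E_erase hi k' y, E_erase hi k' z]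
          have hdx : 0 < x i * E k' (A.erase i) x + E (k'+1) (A.erase i) x := by
            rw [← E_erase hi k' x]; exact hEx1
          have hdy : 0 < y i * E k' (A.erase i) y + E (k'+1) (A.erase i) y := by
            rw [← E_erase hi k' y]; exact hEy1
          exact term_le hcx hcy hcz hdx hdy hsub
        rw [mul_add, kx, ky, kz, hE1]
        linarith
      refine ⟨?_, fun _ => by simpa using hsuper⟩
      -- membership
      intro j hj1 hjk
      rcases Nat.lt_or_ge j (k'+2) with hjlt | hjge
      · exact ihm j hj1 (by omega)
      · have hj : j = k'+2 := by omega
        subst hj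
        have hrx : 0 < E (k'+2) A x / E (k'+1) A x :=
          div_pos (hx (k'+2) (by omega) le_rfl) hEx1
        have hry : 0 < E (k'+2) A y / E (k'+1) A y :=
          div_pos (hy (k'+2) (by omega) le_rfl) hEy1
        have hrz : 0 < E (k'+2) A z / E (k'+1) A z := by linarith
        have : E (k'+2) A z = (E (k'+2) A z / E (k'+1) A z) * E (k'+1) A z :=
          (div_mul_cancel₀ _ (ne_of_gt hEz1)).symm
        rw [this]
        exact mul_pos hrz hEz1



lemma smul_mem {k : ℕ} {A : Finset ι} {x : ι → ℝ} (hx : x ∈ GammaA k A) {c : ℝ} (hc : 0 < c) :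
    (fun i => c * x i) ∈ GammaA k A := by
  intro j hj1 hjk
  rw [E_smul]
  exact mul_pos (pow_pos hc j) (hx j hj1 hjk)

lemma convex_GammaA (k : ℕ) (A : Finset ι) : Convex ℝ (GammaA k A) := by
  intro x hx y hy a b ha hb hab
  rcases eq_or_lt_of_le ha with rfl | ha'
  · have hb1 : b = 1 := by linarith
    subst hb1
    simpa using hy
  rcases eq_or_lt_of_le hb with rfl | hb'
  · have ha1 : a = 1 := by linarith
    subst ha1
    simpa using hx
  have hax : (fun i => a * x i) ∈ GammaA k A := smul_mem hx ha'
  have hby : (fun i => b * y i) ∈ GammaA k A := smul_mem hy hb'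
  have := (main_induction k A _ _ hax hby).1
  have heq : a • x + b • y = (fun i => a * x i + b * y i) := by
    funext i; simp
  rw [heq]
  exact this

lemma ratio_smul (j' : ℕ) (A : Finset ι) (x : ι → ℝ) {c : ℝ} (hc : 0 < c) :
    E (j'+1) A (fun i => c * x i) / E j' A (fun i => c * x i)
      = c * (E (j'+1) A x / E j' A x) := by
  rw [E_smul, E_smul, pow_succ, show c ^ j' * c * E (j'+1) A x = c ^ j' * (c * E (j'+1) A x) by
    ring, mul_div_mul_left _ _ (pow_ne_zero _ (ne_of_gt hc)), mul_div_assoc]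

/-- concavity inequality for the ratio on the cone -/
lemma ratio_concave_ineq {k : ℕ} {A : Finset ι} (j' : ℕ) (hjk : j'+1 ≤ k)
    {x y : ι → ℝ} (hx : x ∈ GammaA k A) (hy : y ∈ GammaA k A)
    {a b : ℝ} (ha : 0 < a) (hb : 0 < b) (hab : a + b = 1) :
    a * (E (j'+1) A x / E j' A x) + b * (E (j'+1) A y / E j' A y)
      ≤ E (j'+1) A (fun i => a * x i + b * y i) / E j' A (fun i => a * x i + b * y i) := by
  have hax : (fun i => a * x i) ∈ GammaA (j'+1) A := smul_mem (GammaA_mono hjk hx) ha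
  have hby : (fun i => b * y i) ∈ GammaA (j'+1) A := smul_mem (GammaA_mono hjk hy) hb
  have h := (main_induction (j'+1) A _ _ hax hby).2 (by omega)
  simp only [Nat.add_sub_cancel] at h
  rw [ratio_smul j' A x ha, ratio_smul j' A y hb] at h
  exact h

/-- geometric mean of positive concave functions is concave -/
lemma geom_mean_concave {V : Type*} [AddCommGroup V] [Module ℝ V] (C : Set V)
    (hC : Convex ℝ C) (s : Finset ℕ) (hs : s.Nonempty) (g : ℕ → V → ℝ)
    (hpos : ∀ j ∈ s, ∀ x ∈ C, 0 < g j x)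
    (hconc : ∀ j ∈ s, ∀ x ∈ C, ∀ y ∈ C, ∀ a b : ℝ, 0 < a → 0 < b → a + b = 1 →
        a * g j x + b * g j y ≤ g j (a • x + b • y)) :
    ConcaveOn ℝ C (fun x => (∏ j ∈ s, g j x) ^ ((1:ℝ)/(s.card:ℝ))) := by
  refine ⟨hC, ?_⟩
  intro x hx y hy a b ha hb hab
  rcases eq_or_lt_of_le ha with rfl | ha'
  · have hb1 : b = 1 := by linarith
    subst hb1
    simp
  rcases eq_or_lt_of_le hb with rfl | hb'
  · have ha1 : a = 1 := by linarith
    subst ha1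
    simp
  set m : ℝ := (s.card : ℝ) with hm
  have hm0 : 0 < m := by
    rw [hm]
    exact_mod_cast Finset.card_pos.2 hs
  have hw : a • x + b • y ∈ C := hC hx hy ha hb hab
  set u : ℕ → ℝ := fun j => a * g j x with hu
  set v : ℕ → ℝ := fun j => b * g j y with hv
  have hupos : ∀ j ∈ s, 0 < u j := fun j hj => mul_pos ha' (hpos j hj x hx)
  have hvpos : ∀ j ∈ s, 0 < v j := fun j hj => mul_pos hb' (hpos j hj y hy)
  have hSpos : ∀ j ∈ s, 0 < u j + v j := fun j hj => add_pos (hupos j hj) (hvpos j hj)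
  -- step 1 : products
  have hprod1 : (∏ j ∈ s, (u j + v j)) ≤ ∏ j ∈ s, g j (a • x + b • y) :=
    Finset.prod_le_prod (fun j hj => (hSpos j hj).le)
      (fun j hj => hconc j hj x hx y hy a b ha' hb' hab)
  have hstep2 : ((∏ j ∈ s, (u j + v j)) : ℝ) ^ ((1:ℝ)/m)
      ≤ (∏ j ∈ s, g j (a • x + b • y)) ^ ((1:ℝ)/m) :=
    Real.rpow_le_rpow (Finset.prod_nonneg fun j hj => (hSpos j hj).le) hprod1
      (by positivity)
  -- step 2 : superadditivity of the geometric mean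
  have hwsum : (∑ _j ∈ s, (1:ℝ)/m) = 1 := by
    rw [Finset.sum_const, nsmul_eq_mul, ← hm, mul_one_div, div_self (ne_of_gt hm0)]
  have hamgmU := Real.geom_mean_le_arith_mean_weighted s (fun _ => (1:ℝ)/m)
    (fun j => u j / (u j + v j)) (fun _ _ => by positivity) hwsum
    (fun j hj => div_nonneg (hupos j hj).le (hSpos j hj).le)
  have hamgmV := Real.geom_mean_le_arith_mean_weighted s (fun _ => (1:ℝ)/m)
    (fun j => v j / (u j + v j)) (fun _ _ => by positivity) hwsum
    (fun j hj => div_nonneg (hvpos j hj).le (hSpos j hj).le)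
  have hsum1 : (∑ j ∈ s, (1/m) * (u j / (u j + v j)))
      + ∑ j ∈ s, (1/m) * (v j / (u j + v j)) = 1 := by
    rw [← Finset.sum_add_distrib]
    have : ∀ j ∈ s, (1/m) * (u j / (u j + v j)) + (1/m) * (v j / (u j + v j)) = 1/m := by
      intro j hj
      have := hSpos j hj
      field_simp
    rw [Finset.sum_congr rfl this, Finset.sum_const, nsmul_eq_mul, ← hm, mul_one_div,
      div_self (ne_of_gt hm0)]
  have hkey : (∏ j ∈ s, (u j / (u j + v j)) ^ ((1:ℝ)/m))
      + ∏ j ∈ s, (v j / (u j + v j)) ^ ((1:ℝ)/m) ≤ 1 := by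
    calc (∏ j ∈ s, (u j / (u j + v j)) ^ ((1:ℝ)/m))
        + ∏ j ∈ s, (v j / (u j + v j)) ^ ((1:ℝ)/m)
      ≤ (∑ j ∈ s, (1/m) * (u j / (u j + v j)))
        + ∑ j ∈ s, (1/m) * (v j / (u j + v j)) := add_le_add hamgmU hamgmV
    _ = 1 := hsum1
  -- convert products of rpow
  have hPU : (∏ j ∈ s, (u j / (u j + v j)) ^ ((1:ℝ)/m))
      = (∏ j ∈ s, u j) ^ ((1:ℝ)/m) / (∏ j ∈ s, (u j + v j)) ^ ((1:ℝ)/m) := by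
    rw [Real.finset_prod_rpow s _ (fun j hj => div_nonneg (hupos j hj).le (hSpos j hj).le),
      ← Real.div_rpow (Finset.prod_nonneg fun j hj => (hupos j hj).le)
        (Finset.prod_nonneg fun j hj => (hSpos j hj).le), Finset.prod_div_distrib]
  have hPV : (∏ j ∈ s, (v j / (u j + v j)) ^ ((1:ℝ)/m))
      = (∏ j ∈ s, v j) ^ ((1:ℝ)/m) / (∏ j ∈ s, (u j + v j)) ^ ((1:ℝ)/m) := by
    rw [Real.finset_prod_rpow s _ (fun j hj => div_nonneg (hvpos j hj).le (hSpos j hj).le),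
      ← Real.div_rpow (Finset.prod_nonneg fun j hj => (hvpos j hj).le)
        (Finset.prod_nonneg fun j hj => (hSpos j hj).le), Finset.prod_div_distrib]
  have hProdS : (0:ℝ) < (∏ j ∈ s, (u j + v j)) ^ ((1:ℝ)/m) :=
    Real.rpow_pos_of_pos (Finset.prod_pos hSpos) _
  have hsuper : (∏ j ∈ s, u j) ^ ((1:ℝ)/m) + (∏ j ∈ s, v j) ^ ((1:ℝ)/m)
      ≤ (∏ j ∈ s, (u j + v j)) ^ ((1:ℝ)/m) := by
    rw [hPU, hPV] at hkey
    rw [← add_div, div_le_one hProdS] at hkey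
    exact hkey
  -- unscale
  have hscaleU : (∏ j ∈ s, u j) ^ ((1:ℝ)/m) = a * (∏ j ∈ s, g j x) ^ ((1:ℝ)/m) := by
    rw [hu]
    simp only []
    rw [Finset.prod_mul_distrib, Finset.prod_const,
      Real.mul_rpow (pow_nonneg ha'.le _) (Finset.prod_nonneg fun j hj => (hpos j hj x hx).le),
      ← Real.rpow_natCast a s.card, ← Real.rpow_mul ha'.le]
    congr 2
    field_simp
    rw [← hm, div_self (ne_of_gt hm0), Real.rpow_one]
  have hscaleV : (∏ j ∈ s, v j) ^ ((1:ℝ)/m) = b * (∏ j ∈ s, g j y) ^ ((1:ℝ)/m) := by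
    rw [hv]
    simp only []
    rw [Finset.prod_mul_distrib, Finset.prod_const,
      Real.mul_rpow (pow_nonneg hb'.le _) (Finset.prod_nonneg fun j hj => (hpos j hj y hy).le),
      ← Real.rpow_natCast b s.card, ← Real.rpow_mul hb'.le]
    congr 2
    field_simp
    rw [← hm, div_self (ne_of_gt hm0), Real.rpow_one]
  have := le_trans hsuper hstep2
  rw [hscaleU, hscaleV] at this
  simpa using this

/-- telescoping -/
lemma prod_ratio_telescope (F : ℕ → ℝ) : ∀ {l k : ℕ}, l ≤ k →
    (∀ j, l ≤ j → j ≤ k → F j ≠ 0) →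
    ∏ j ∈ Finset.Ioc l k, (F j / F (j-1)) = F k / F l := by
  intro l k hlk
  induction k, hlk using Nat.le_induction with
  | base =>
    intro hne
    simp [div_self (hne l le_rfl le_rfl)]
  | succ k hlk ih =>
    intro hne
    rw [Finset.prod_Ioc_succ_top (hlk : l ≤ k)]
    rw [ih (fun j h1 h2 => hne j h1 (by omega))]
    have h1 : F k ≠ 0 := hne k hlk (by omega)
    have h2 : F l ≠ 0 := hne l le_rfl (by omega)
    have h3 : k + 1 - 1 = k := by omega
    rw [h3]
    field_simp

lemma concaveOn_congr {V : Type*} [AddCommGroup V] [Module ℝ V] {C : Set V}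
    {F G : V → ℝ} (h : ConcaveOn ℝ C F) (he : ∀ x ∈ C, F x = G x) : ConcaveOn ℝ C G := by
  refine ⟨h.1, ?_⟩
  intro x hx y hy a b ha hb hab
  rw [← he _ (h.1 hx hy ha hb hab), ← he _ hx, ← he _ hy]
  exact h.2 hx hy ha hb hab


end Gq

open Gq in
/-- For 0 ≤ l < k ≤ n, the function (σ_k/σ_l)^{1/(k-l)} is concave on Γ_k. -/
theorem quotient_concave {n k l : ℕ} (hl : l < k) (hk : k ≤ n) :
    ConcaveOn ℝ (Gamma k : Set (Fin n → ℝ))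
      (fun x => (sigma' k x / sigma' l x) ^ ((1 : ℝ) / ((k : ℝ) - (l : ℝ)))) := by

  classical
  have hGamma : (Gamma k : Set (Fin n → ℝ)) = GammaA k (Finset.univ : Finset (Fin n)) := rfl
  set s : Finset ℕ := Finset.Ioc l k with hs
  have hsne : s.Nonempty := ⟨k, by rw [hs, Finset.mem_Ioc]; omega⟩
  have hcard : s.card = k - l := by rw [hs, Nat.card_Ioc]
  set g : ℕ → (Fin n → ℝ) → ℝ := fun j x => E j Finset.univ x / E (j-1) Finset.univ x with hg
  have hC : Convex ℝ (GammaA k (Finset.univ : Finset (Fin n))) := convex_GammaA k _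
  have hpos : ∀ j ∈ s, ∀ x ∈ GammaA k (Finset.univ : Finset (Fin n)), 0 < g j x := by
    intro j hj x hx
    rw [hs, Finset.mem_Ioc] at hj
    exact div_pos (E_pos_of_mem hx hj.2) (E_pos_of_mem hx (by omega))
  have hconc : ∀ j ∈ s, ∀ x ∈ GammaA k (Finset.univ : Finset (Fin n)),
      ∀ y ∈ GammaA k (Finset.univ : Finset (Fin n)), ∀ a b : ℝ,
      0 < a → 0 < b → a + b = 1 → a * g j x + b * g j y ≤ g j (a • x + b • y) := by
    intro j hj x hx y hy a b ha hb hab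
    rw [hs, Finset.mem_Ioc] at hj
    obtain ⟨j', rfl⟩ : ∃ j', j = j'+1 := ⟨j-1, by omega⟩
    have heq : a • x + b • y = fun i => a * x i + b * y i := by
      funext i; simp
    rw [hg]
    simp only [Nat.add_sub_cancel]
    rw [heq]
    exact ratio_concave_ineq j' hj.2 hx hy ha hb hab
  have hmain := geom_mean_concave _ hC s hsne g hpos hconc
  rw [hGamma]
  apply concaveOn_congr hmain
  intro x hx
  have hprod : ∏ j ∈ s, g j x = E k Finset.univ x / E l Finset.univ x := by
    rw [hg]
    exact prod_ratio_telescope (fun j => E j Finset.univ x) (le_of_lt hl)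
      (fun j h1 h2 => (E_pos_of_mem hx h2).ne')
  rw [hprod, hcard]
  have hcast : (((k - l : ℕ)) : ℝ) = (k:ℝ) - (l:ℝ) := by
    rw [Nat.cast_sub hl.le]
  rw [hcast]
  rfl
end
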